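/- arXiv:2506.07832 — 2 statements merged into one kernel-verified Lean document; each statement's English description precedes it below -/
import Mathlib

section
/- Characterization of absolute integrability: let K be a compact line and G : K → ℝ a nondecreasing amenable function. If f is G-integrable and F(x) = ∫_{0_K}^x f dG, then |f| is G-integrable if and only if F ∈ NBV(K) (F is amenable of bounded variation); in that case ∫_K |f| dG = |f(0_K)| G(0_K) + Var(F, K). -/
open Set Filter MeasureTheory

/-- A tagged partition of the interval `[a,b]` in a linear order `K`. -/
structure TaggedPartition (K : Type*) [LinearOrder K] (a b : K) where
  n : ℕ
  x : ℕ → K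
  t : ℕ → K
  x_zero : x 0 = a
  x_last : x n = b
  mono : ∀ i < n, x i ≤ x (i + 1)
  tag_mem : ∀ i < n, t (i + 1) ∈ Set.Icc (x i) (x (i + 1))

/-- A gauge on the interval `[a,b]` of `K`: each point of `[a,b]` is assigned a
relatively open subinterval of `[a,b]` containing it. -/
def IsGauge (K : Type*) [LinearOrder K] [TopologicalSpace K] (a b : K) (δ : K → Set K) : Prop :=
  ∀ x ∈ Set.Icc a b, x ∈ δ x ∧ (δ x).OrdConnected ∧ ∃ U, IsOpen U ∧ δ x = U ∩ Set.Icc a b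

/-- A tagged partition is `δ`-fine when `(x_{i-1}, x_i] ⊆ δ(t_i)` for all `i`. -/
def TaggedPartition.IsFine {K : Type*} [LinearOrder K] {a b : K}
    (P : TaggedPartition K a b) (δ : K → Set K) : Prop :=
  ∀ i < P.n, Set.Ioc (P.x i) (P.x (i + 1)) ⊆ δ (P.t (i + 1))

/-- The Riemann sum `S(f,G,P) = f(a)G(a) + Σ f(t_i)(G(x_i) - G(x_{i-1}))`. -/
noncomputable def riemannSum {K : Type*} [LinearOrder K] {a b : K}
    (f G : K → ℝ) (P : TaggedPartition K a b) : ℝ :=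
  f a * G a + ∑ i ∈ Finset.range P.n, f (P.t (i + 1)) * (G (P.x (i + 1)) - G (P.x i))

/-- `f` has Kurzweil–Stieltjes integral `A` with respect to `G` over `[a,b]`. -/
def HasIntegral {K : Type*} [LinearOrder K] [TopologicalSpace K]
    (f G : K → ℝ) (a b : K) (A : ℝ) : Prop :=
  ∀ ε : ℝ, 0 < ε → ∃ δ : K → Set K, IsGauge K a b δ ∧
    ∀ P : TaggedPartition K a b, P.IsFine δ → |riemannSum f G P - A| < ε

/-- `G` is amenable: right-continuous everywhere, and regulated (left limits exist at
left-dense points, right limits at right-dense points). -/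
def Amenable {K : Type*} [LinearOrder K] [TopologicalSpace K] [BoundedOrder K]
    (G : K → ℝ) : Prop :=
  (∀ x : K, ContinuousWithinAt G (Set.Ici x) x) ∧
  (∀ x : K, x ≠ ⊥ → (¬ ∃ y, y ⋖ x) → ∃ l, Filter.Tendsto G (nhdsWithin x (Set.Iio x)) (nhds l)) ∧
  (∀ x : K, x ≠ ⊤ → (¬ ∃ y, x ⋖ y) → ∃ l, Filter.Tendsto G (nhdsWithin x (Set.Ioi x)) (nhds l))

open Classical in
/-- `L_G(x)`: `0` at the least element, `G` of the immediate predecessor if `x` is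
left-isolated, and the left limit of `G` at `x` if `x` is left-dense. -/
noncomputable def Lfun {K : Type*} [LinearOrder K] [TopologicalSpace K] [BoundedOrder K]
    (G : K → ℝ) (x : K) : ℝ :=
  if x = ⊥ then 0
  else if h : ∃ y, y ⋖ x then G h.choose
  else Function.leftLim G x

/-- The set of variation sums of `G` over divisions of `[a,b]`. -/
def varSums {K : Type*} [LinearOrder K] (G : K → ℝ) (a b : K) : Set ℝ :=
  {v | ∃ (n : ℕ) (x : ℕ → K), x 0 = a ∧ x n = b ∧ (∀ i < n, x i ≤ x (i + 1)) ∧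
        v = ∑ i ∈ Finset.range n, |G (x (i + 1)) - G (x i)|}

/-- `S` is null for the outer measure induced by `μ` via covers by countably many
open intervals. -/
def GNull {K : Type*} [LinearOrder K] [TopologicalSpace K] [MeasurableSpace K]
    (μ : MeasureTheory.Measure K) (S : Set K) : Prop :=
  ∀ ε : ℝ, 0 < ε → ∃ I : ℕ → Set K, (∀ n, IsOpen (I n) ∧ (I n).OrdConnected) ∧
    S ⊆ ⋃ n, I n ∧ ∑' n, μ (I n) < ENNReal.ofReal ε


/-! ### Infrastructure -/
set_option linter.unusedSectionVars false

section Infra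

variable {K : Type*} [LinearOrder K]

namespace TaggedPartition

/-- The sum without the endpoint term. -/
noncomputable def ssum {a b : K} (f G : K → ℝ) (P : TaggedPartition K a b) : ℝ :=
  ∑ i ∈ Finset.range P.n, f (P.t (i + 1)) * (G (P.x (i + 1)) - G (P.x i))

lemma riemannSum_eq_ssum {a b : K} (f G : K → ℝ) (P : TaggedPartition K a b) :
    riemannSum f G P = f a * G a + P.ssum f G := rfl

/-- The trivial partition of a degenerate interval. -/
def point' (a b : K) (h : a = b) : TaggedPartition K a b where
  n := 0
  x := fun _ => a
  t := fun _ => a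
  x_zero := rfl
  x_last := h
  mono := fun i hi => absurd hi (Nat.not_lt_zero i)
  tag_mem := fun i hi => absurd hi (Nat.not_lt_zero i)

lemma point'_isFine (a b : K) (h : a = b) (δ : K → Set K) : (point' a b h).IsFine δ :=
  fun i hi => absurd hi (Nat.not_lt_zero i)

lemma point'_ssum (a b : K) (h : a = b) (f G : K → ℝ) : (point' a b h).ssum f G = 0 := by
  simp [ssum, point']

/-- The one-interval tagged partition. -/
def single (u v : K) (huv : u ≤ v) (τ : K) (hτ : τ ∈ Set.Icc u v) : TaggedPartition K u v where
  n := 1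
  x := fun i => if i = 0 then u else v
  t := fun _ => τ
  x_zero := rfl
  x_last := rfl
  mono := by
    intro i hi
    have : i = 0 := by omega
    subst this; simpa using huv
  tag_mem := by
    intro i hi
    have : i = 0 := by omega
    subst this; simpa using hτ

lemma single_isFine {u v : K} (huv : u ≤ v) {τ : K} (hτ : τ ∈ Set.Icc u v)
    {δ : K → Set K} (h : Set.Ioc u v ⊆ δ τ) : (single u v huv τ hτ).IsFine δ := by
  intro i hi
  have hi' : i < 1 := hi
  have : i = 0 := by omega
  subst this
  simpa [single] using h

lemma single_ssum {u v : K} (huv : u ≤ v) {τ : K} (hτ : τ ∈ Set.Icc u v) (f G : K → ℝ) :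
    (single u v huv τ hτ).ssum f G = f τ * (G v - G u) := by
  simp [ssum, single]

/-- Concatenation of tagged partitions. -/
def trans {a b c : K} (P : TaggedPartition K a b) (Q : TaggedPartition K b c) :
    TaggedPartition K a c where
  n := P.n + Q.n
  x := fun i => if i ≤ P.n then P.x i else Q.x (i - P.n)
  t := fun i => if i ≤ P.n then P.t i else Q.t (i - P.n)
  x_zero := by simp [P.x_zero]
  x_last := by
    rcases Nat.eq_zero_or_pos Q.n with h | h
    · have h1 : P.n + Q.n ≤ P.n := by omega
      have h2 : Q.x 0 = c := by rw [← h]; exact Q.x_last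
      simp only [if_pos h1]
      rw [h, Nat.add_zero, P.x_last, ← Q.x_zero, h2]
    · have h1 : ¬ (P.n + Q.n ≤ P.n) := by omega
      simp only [if_neg h1, Nat.add_sub_cancel_left, Q.x_last]
  mono := by
    intro i hi
    rcases lt_or_ge i P.n with h | h
    · have h1 : i ≤ P.n := by omega
      have h2 : i + 1 ≤ P.n := by omega
      simp only [if_pos h1, if_pos h2]
      exact P.mono i h
    · obtain ⟨j, rfl⟩ : ∃ j, i = P.n + j := ⟨i - P.n, by omega⟩
      have hjQ : j < Q.n := by omega
      have h2 : ¬ (P.n + j + 1 ≤ P.n) := by omega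
      have h3 : P.n + j + 1 - P.n = j + 1 := by omega
      rcases Nat.eq_zero_or_pos j with rfl | hj
      · simp only [Nat.add_zero, if_pos le_rfl, if_neg h2, h3, P.x_last, ← Q.x_zero]
        exact Q.mono 0 hjQ
      · have h4 : ¬ (P.n + j ≤ P.n) := by omega
        have h5 : P.n + j - P.n = j := by omega
        simp only [if_neg h2, if_neg h4, h3, h5]
        exact Q.mono j hjQ
  tag_mem := by
    intro i hi
    rcases lt_or_ge i P.n with h | h
    · have h1 : i ≤ P.n := by omega
      have h2 : i + 1 ≤ P.n := by omega
      simp only [if_pos h1, if_pos h2]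
      exact P.tag_mem i h
    · obtain ⟨j, rfl⟩ : ∃ j, i = P.n + j := ⟨i - P.n, by omega⟩
      have hjQ : j < Q.n := by omega
      have h2 : ¬ (P.n + j + 1 ≤ P.n) := by omega
      have h3 : P.n + j + 1 - P.n = j + 1 := by omega
      rcases Nat.eq_zero_or_pos j with rfl | hj
      · simp only [Nat.add_zero, if_pos le_rfl, if_neg h2, h3, P.x_last, ← Q.x_zero]
        exact Q.tag_mem 0 hjQ
      · have h4 : ¬ (P.n + j ≤ P.n) := by omega
        have h5 : P.n + j - P.n = j := by omega
        simp only [if_neg h2, if_neg h4, h3, h5]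
        exact Q.tag_mem j hjQ

lemma trans_n {a b c : K} (P : TaggedPartition K a b) (Q : TaggedPartition K b c) :
    (P.trans Q).n = P.n + Q.n := rfl

lemma trans_x_of_le {a b c : K} (P : TaggedPartition K a b) (Q : TaggedPartition K b c)
    {i : ℕ} (h : i ≤ P.n) : (P.trans Q).x i = P.x i := if_pos h

lemma trans_x_add {a b c : K} (P : TaggedPartition K a b) (Q : TaggedPartition K b c)
    (j : ℕ) : (P.trans Q).x (P.n + j) = Q.x j := by
  rcases Nat.eq_zero_or_pos j with rfl | hj
  · have h1 : P.n + 0 ≤ P.n := le_of_eq (Nat.add_zero _)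
    show (if P.n + 0 ≤ P.n then P.x (P.n + 0) else Q.x (P.n + 0 - P.n)) = Q.x 0
    rw [if_pos h1, Nat.add_zero, P.x_last, Q.x_zero]
  · have h : ¬ (P.n + j ≤ P.n) := by omega
    have h2 : P.n + j - P.n = j := by omega
    show (if P.n + j ≤ P.n then P.x (P.n + j) else Q.x (P.n + j - P.n)) = Q.x j
    rw [if_neg h, h2]

lemma trans_t_add {a b c : K} (P : TaggedPartition K a b) (Q : TaggedPartition K b c)
    {j : ℕ} (hj : 1 ≤ j) : (P.trans Q).t (P.n + j) = Q.t j := by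
  have h : ¬ (P.n + j ≤ P.n) := by omega
  have h2 : P.n + j - P.n = j := by omega
  show (if P.n + j ≤ P.n then P.t (P.n + j) else Q.t (P.n + j - P.n)) = Q.t j
  rw [if_neg h, h2]

lemma trans_t_of_le {a b c : K} (P : TaggedPartition K a b) (Q : TaggedPartition K b c)
    {i : ℕ} (h : i ≤ P.n) : (P.trans Q).t i = P.t i := if_pos h

lemma IsFine.trans {a b c : K} {P : TaggedPartition K a b} {Q : TaggedPartition K b c}
    {δ : K → Set K} (hP : P.IsFine δ) (hQ : Q.IsFine δ) : (P.trans Q).IsFine δ := by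
  intro i hi
  rcases lt_or_ge i P.n with h | h
  · rw [trans_x_of_le P Q (by omega : i ≤ P.n), trans_x_of_le P Q (by omega : i + 1 ≤ P.n),
      trans_t_of_le P Q (by omega : i + 1 ≤ P.n)]
    exact hP i h
  · obtain ⟨j, rfl⟩ : ∃ j, i = P.n + j := ⟨i - P.n, by omega⟩
    have hjQ : j < Q.n := by rw [trans_n] at hi; omega
    have : P.n + j + 1 = P.n + (j + 1) := by omega
    rw [trans_x_add P Q j, this, trans_x_add P Q (j + 1), trans_t_add P Q (by omega : 1 ≤ j + 1)]
    exact hQ j hjQ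

lemma ssum_trans {a b c : K} (P : TaggedPartition K a b) (Q : TaggedPartition K b c)
    (f G : K → ℝ) : (P.trans Q).ssum f G = P.ssum f G + Q.ssum f G := by
  unfold ssum
  rw [trans_n, Finset.sum_range_add]
  congr 1
  · apply Finset.sum_congr rfl
    intro i hi
    have hi' : i < P.n := Finset.mem_range.1 hi
    rw [trans_x_of_le P Q (by omega : i ≤ P.n), trans_x_of_le P Q (by omega : i + 1 ≤ P.n),
      trans_t_of_le P Q (by omega : i + 1 ≤ P.n)]
  · apply Finset.sum_congr rfl
    intro j hj
    have : P.n + j + 1 = P.n + (j + 1) := by omega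
    rw [this, trans_x_add P Q j, trans_x_add P Q (j + 1), trans_t_add P Q (by omega : 1 ≤ j + 1)]

lemma riemannSum_trans {a b c : K} (P : TaggedPartition K a b) (Q : TaggedPartition K b c)
    (f G : K → ℝ) : riemannSum f G (P.trans Q) = riemannSum f G P + Q.ssum f G := by
  rw [riemannSum_eq_ssum, riemannSum_eq_ssum, ssum_trans]; ring

private lemma sum_range_two_mul (h : ℕ → ℝ) (n : ℕ) :
    ∑ i ∈ Finset.range (2 * n), h i = ∑ k ∈ Finset.range n, (h (2 * k) + h (2 * k + 1)) := by
  induction n with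
  | zero => simp
  | succ n ih =>
      have : 2 * (n + 1) = (2 * n + 1) + 1 := by omega
      rw [this, Finset.sum_range_succ, Finset.sum_range_succ, Finset.sum_range_succ, ih]
      ring

/-- Bisect every interval of `P` at its tag. -/
def split {a b : K} (P : TaggedPartition K a b) : TaggedPartition K a b where
  n := 2 * P.n
  x := fun i => if i % 2 = 0 then P.x (i / 2) else P.t (i / 2 + 1)
  t := fun i => P.t ((i + 1) / 2)
  x_zero := by simpa using P.x_zero
  x_last := by
    have h1 : (2 * P.n) % 2 = 0 := by omega
    have h2 : (2 * P.n) / 2 = P.n := by omega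
    simp only [h1, if_pos, h2, P.x_last]
  mono := by
    intro i hi
    rcases Nat.even_or_odd i with ⟨k, hk⟩ | ⟨k, hk⟩
    · subst hk
      have e1 : (k + k) % 2 = 0 := by omega
      have e2 : (k + k) / 2 = k := by omega
      have e3 : (k + k + 1) % 2 = 1 := by omega
      have e4 : (k + k + 1) / 2 = k := by omega
      simp only [e1, e2, e3, e4, if_pos, if_neg, Nat.one_ne_zero, reduceIte]
      exact (P.tag_mem k (by omega)).1
    · subst hk
      have e1 : (2 * k + 1) % 2 = 1 := by omega
      have e2 : (2 * k + 1) / 2 = k := by omega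
      have e3 : (2 * k + 1 + 1) % 2 = 0 := by omega
      have e4 : (2 * k + 1 + 1) / 2 = k + 1 := by omega
      simp only [e1, e2, e3, e4, Nat.one_ne_zero, reduceIte]
      exact (P.tag_mem k (by omega)).2
  tag_mem := by
    intro i hi
    rcases Nat.even_or_odd i with ⟨k, hk⟩ | ⟨k, hk⟩
    · subst hk
      have e1 : (k + k) % 2 = 0 := by omega
      have e2 : (k + k) / 2 = k := by omega
      have e3 : (k + k + 1) % 2 = 1 := by omega
      have e4 : (k + k + 1) / 2 = k := by omega
      have e5 : (k + k + 1 + 1) / 2 = k + 1 := by omega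
      simp only [e1, e2, e3, e4, e5, Nat.one_ne_zero, reduceIte]
      exact ⟨(P.tag_mem k (by omega)).1, le_rfl⟩
    · subst hk
      have e1 : (2 * k + 1) % 2 = 1 := by omega
      have e2 : (2 * k + 1) / 2 = k := by omega
      have e3 : (2 * k + 1 + 1) % 2 = 0 := by omega
      have e4 : (2 * k + 1 + 1) / 2 = k + 1 := by omega
      have e5 : (2 * k + 1 + 1 + 1) / 2 = k + 1 := by omega
      simp only [e1, e2, e3, e4, e5, Nat.one_ne_zero, reduceIte]
      exact ⟨le_rfl, (P.tag_mem k (by omega)).2⟩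

lemma split_n {a b : K} (P : TaggedPartition K a b) : P.split.n = 2 * P.n := rfl

lemma split_x_even {a b : K} (P : TaggedPartition K a b) (k : ℕ) :
    P.split.x (2 * k) = P.x k := by
  have e1 : (2 * k) % 2 = 0 := by omega
  have e2 : (2 * k) / 2 = k := by omega
  show (if (2 * k) % 2 = 0 then P.x ((2 * k) / 2) else _) = P.x k
  rw [if_pos e1, e2]

lemma split_x_odd {a b : K} (P : TaggedPartition K a b) (k : ℕ) :
    P.split.x (2 * k + 1) = P.t (k + 1) := by
  have e1 : (2 * k + 1) % 2 = 1 := by omega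
  have e2 : (2 * k + 1) / 2 = k := by omega
  show (if (2 * k + 1) % 2 = 0 then P.x ((2 * k + 1) / 2) else P.t ((2 * k + 1) / 2 + 1)) = _
  rw [e1, e2]
  simp

lemma split_t {a b : K} (P : TaggedPartition K a b) (j : ℕ) :
    P.split.t j = P.t ((j + 1) / 2) := rfl

lemma IsFine.split {a b : K} {P : TaggedPartition K a b} {δ : K → Set K}
    (hP : P.IsFine δ) : P.split.IsFine δ := by
  intro i hi
  have hi' : i < 2 * P.n := hi
  rcases Nat.even_or_odd i with ⟨k, hk⟩ | ⟨k, hk⟩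
  · have hk' : i = 2 * k := by omega
    subst hk'
    have e5 : (2 * k + 1 + 1) / 2 = k + 1 := by omega
    rw [split_x_even, split_x_odd, split_t, e5]
    exact fun z hz => hP k (by omega) ⟨hz.1, le_trans hz.2 (P.tag_mem k (by omega)).2⟩
  · have hk' : i = 2 * k + 1 := by omega
    subst hk'
    have e5 : (2 * k + 1 + 1 + 1) / 2 = k + 1 := by omega
    have e6 : 2 * k + 1 + 1 = 2 * (k + 1) := by omega
    rw [split_t, e5, e6, split_x_even, split_x_odd]
    exact fun z hz => hP k (by omega) ⟨lt_of_le_of_lt (P.tag_mem k (by omega)).1 hz.1, hz.2⟩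

lemma ssum_split {a b : K} (P : TaggedPartition K a b) (f G : K → ℝ) :
    P.split.ssum f G = P.ssum f G := by
  unfold ssum
  rw [split_n, sum_range_two_mul]
  apply Finset.sum_congr rfl
  intro k hk
  have e5 : (2 * k + 1 + 1) / 2 = k + 1 := by omega
  have e6 : 2 * k + 1 + 1 = 2 * (k + 1) := by omega
  have e7 : (2 * k + 1 + 1 + 1) / 2 = k + 1 := by omega
  rw [split_t, split_t, e5, e7, e6, split_x_even, split_x_even, split_x_odd]
  ring

end TaggedPartition

section Gauge

variable [TopologicalSpace K]

lemma IsGauge.inter {a b : K} {δ₁ δ₂ : K → Set K} (h₁ : IsGauge K a b δ₁)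
    (h₂ : IsGauge K a b δ₂) : IsGauge K a b (fun x => δ₁ x ∩ δ₂ x) := by
  intro x hx
  obtain ⟨hm₁, hc₁, U₁, hU₁, he₁⟩ := h₁ x hx
  obtain ⟨hm₂, hc₂, U₂, hU₂, he₂⟩ := h₂ x hx
  refine ⟨⟨hm₁, hm₂⟩, hc₁.inter hc₂, U₁ ∩ U₂, hU₁.inter hU₂, ?_⟩
  show δ₁ x ∩ δ₂ x = _
  rw [he₁, he₂]
  ext z; simp; tauto

lemma IsGauge.restrict {a b a' b' : K} {δ : K → Set K} (h : IsGauge K a b δ)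
    (hsub : Set.Icc a' b' ⊆ Set.Icc a b) :
    IsGauge K a' b' (fun x => δ x ∩ Set.Icc a' b') := by
  intro x hx
  obtain ⟨hm, hc, U, hU, he⟩ := h x (hsub hx)
  refine ⟨⟨hm, hx⟩, hc.inter Set.ordConnected_Icc, U, hU, ?_⟩
  show δ x ∩ Set.Icc a' b' = _
  rw [he]
  ext z; simp only [Set.mem_inter_iff, Set.mem_Icc]; constructor
  · rintro ⟨⟨h1, h2⟩, h3⟩; exact ⟨h1, h3⟩
  · rintro ⟨h1, h3⟩
    have := hsub (Set.mem_Icc.2 h3)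
    exact ⟨⟨h1, this⟩, h3⟩

omit [TopologicalSpace K] in
lemma TaggedPartition.IsFine.mono' {a b : K} {P : TaggedPartition K a b}
    {δ δ' : K → Set K} (h : P.IsFine δ') (hle : ∀ x, δ' x ⊆ δ x) : P.IsFine δ :=
  fun i hi => (h i hi).trans (hle _)

end Gauge

section Cousin

variable [TopologicalSpace K] [OrderTopology K] [CompactSpace K]

/-- Cousin's lemma on a compact line: every gauge admits a fine tagged partition. -/
lemma cousin {a b : K} (hab : a ≤ b) {δ : K → Set K} (hδ : IsGauge K a b δ) :
    ∃ P : TaggedPartition K a b, P.IsFine δ := by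
  classical
  set S : Set K := {c | c ∈ Set.Icc a b ∧ ∃ P : TaggedPartition K a c, P.IsFine δ} with hS
  have haS : a ∈ S := ⟨⟨le_rfl, hab⟩, TaggedPartition.point' a a rfl,
    TaggedPartition.point'_isFine a a rfl δ⟩
  have hSne : S.Nonempty := ⟨a, haS⟩
  have hSb : ∀ c ∈ S, c ≤ b := fun c hc => hc.1.2
  -- get the least upper bound of S
  obtain ⟨c, _, hlubcl⟩ := (isClosed_closure (s := S)).isCompact.exists_isLUB
    (hSne.mono subset_closure)
  have hlub : IsLUB S c := by
    constructor
    · exact fun y hy => hlubcl.1 (subset_closure hy)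
    · intro y hy
      exact hlubcl.2 (by rw [upperBounds_closure]; exact hy)
  have hac : a ≤ c := hlub.1 haS
  have hcb : c ≤ b := hlub.2 hSb
  obtain ⟨hcx, hconn, U, hU, hUeq⟩ := hδ c ⟨hac, hcb⟩
  have hcU : c ∈ U := by rw [hUeq] at hcx; exact hcx.1
  -- c itself belongs to S
  have hcS : c ∈ S := by
    have hccl : c ∈ closure S := hlub.mem_closure hSne
    obtain ⟨e, heU, heS⟩ := mem_closure_iff.1 hccl U hU hcU
    have hec : e ≤ c := hlub.1 heS
    obtain ⟨heI, Pe, hPe⟩ := heS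
    have heδ : e ∈ δ c := by rw [hUeq]; exact ⟨heU, heI⟩
    refine ⟨⟨hac, hcb⟩, Pe.trans (TaggedPartition.single e c hec c ⟨hec, le_rfl⟩), ?_⟩
    refine hPe.trans (TaggedPartition.single_isFine hec _ ?_)
    exact fun z hz => hconn.out heδ hcx ⟨hz.1.le, hz.2⟩
  -- c must equal b
  have hcb' : c = b := by
    by_contra hne
    have hlt : c < b := lt_of_le_of_ne hcb hne
    obtain ⟨⟨_, _⟩, Pc, hPc⟩ := hcS
    by_cases hsucc : ∃ d, c ⋖ d
    · obtain ⟨d, hd⟩ := hsucc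
      have hdb : d ≤ b := by
        by_contra hbd
        exact hd.2 hlt (not_le.1 hbd)
      have hdδ : d ∈ δ d := (hδ d ⟨hac.trans hd.1.le, hdb⟩).1
      have hfine : Set.Ioc c d ⊆ δ d := by
        intro z hz
        have : z = d := le_antisymm hz.2 (not_lt.1 fun h => hd.2 hz.1 h)
        rwa [this]
      have hdS : d ∈ S := ⟨⟨hac.trans hd.1.le, hdb⟩,
        Pc.trans (TaggedPartition.single c d hd.1.le d ⟨hd.1.le, le_rfl⟩),
        hPc.trans (TaggedPartition.single_isFine hd.1.le _ hfine)⟩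
      exact absurd (hlub.1 hdS) (not_le.2 hd.1)
    · obtain ⟨d, hcd, hIcod⟩ := exists_Ico_subset_of_mem_nhds (hU.mem_nhds hcU) ⟨b, hlt⟩
      have : ¬ (c ⋖ d) := fun h => hsucc ⟨d, h⟩
      obtain ⟨m, hcm, hmd⟩ := (not_covBy_iff hcd).1 this
      set m' := min m b with hm'
      have hcm' : c < m' := lt_min hcm hlt
      have hm'b : m' ≤ b := min_le_right _ _
      have hm'U : m' ∈ U := hIcod ⟨hcm'.le, lt_of_le_of_lt (min_le_left _ _) hmd⟩
      have hm'δ : m' ∈ δ c := by rw [hUeq]; exact ⟨hm'U, hac.trans hcm'.le, hm'b⟩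
      have hm'S : m' ∈ S := by
        refine ⟨⟨hac.trans hcm'.le, hm'b⟩,
          Pc.trans (TaggedPartition.single c m' hcm'.le c ⟨le_rfl, hcm'.le⟩),
          hPc.trans (TaggedPartition.single_isFine hcm'.le _ ?_)⟩
        exact fun z hz => hconn.out hcx hm'δ ⟨hz.1.le, hz.2⟩
      exact absurd (hlub.1 hm'S) (not_le.2 hcm')
  obtain ⟨_, P, hP⟩ := hcS
  subst hcb'
  exact ⟨P, hP⟩

end Cousin

section Div

omit [LinearOrder K] in
lemma div_mono {α : Type*} [Preorder α] {n : ℕ} {x : ℕ → α} (h : ∀ i < n, x i ≤ x (i + 1)) :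
    ∀ i j, i ≤ j → j ≤ n → x i ≤ x j := by
  intro i j hij hjn
  induction j with
  | zero =>
      have : i = 0 := by omega
      subst this; exact le_rfl
  | succ j ih =>
      rcases Nat.eq_or_lt_of_le hij with rfl | hlt
      · exact le_rfl
      · exact (ih (by omega) (by omega)).trans (h j (by omega))

lemma exists_mem_Ioc_div : ∀ {n : ℕ} {x : ℕ → K}, (∀ i < n, x i ≤ x (i + 1)) → ∀ {c : K},
    x 0 < c → c ≤ x n → ∃ i < n, x i < c ∧ c ≤ x (i + 1) := by
  intro n
  induction n with
  | zero => intro x _ c h0 hn; exact absurd (h0.trans_le hn) (lt_irrefl _)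
  | succ n ih =>
      intro x h c h0 hn
      rcases le_or_gt c (x n) with hc | hc
      · obtain ⟨i, hi, h1, h2⟩ := ih (fun i hi => h i (by omega)) h0 hc
        exact ⟨i, by omega, h1, h2⟩
      · exact ⟨n, by omega, hc, hn⟩

private lemma sum_blocks_eq (g : ℕ → ℝ) (κ : ℕ → ℕ) :
    ∀ m : ℕ, (∀ j < m, κ j ≤ κ (j + 1)) →
    ∑ j ∈ Finset.range m, ∑ k ∈ Finset.Ico (κ j) (κ (j + 1)), g k
      = ∑ k ∈ Finset.Ico (κ 0) (κ m), g k := by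
  intro m
  induction m with
  | zero => intro _; simp
  | succ m ih =>
      intro hmono
      rw [Finset.sum_range_succ, ih (fun j hj => hmono j (by omega))]
      exact Finset.sum_Ico_consecutive _
        (div_mono hmono 0 m (by omega) (by omega)) (hmono m (by omega))

/-- Variation sums increase under refinement of the division. -/
lemma varsum_le_varsum_of_subdiv (F : K → ℝ) {m n : ℕ} {y z : ℕ → K}
    (hymono : ∀ j < m, y j ≤ y (j + 1)) (hzmono : ∀ i < n, z i ≤ z (i + 1))
    (hsub : ∀ j ≤ m, ∃ k, k ≤ n ∧ z k = y j) :
    ∑ j ∈ Finset.range m, |F (y (j + 1)) - F (y j)|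
      ≤ ∑ k ∈ Finset.range n, |F (z (k + 1)) - F (z k)| := by
  classical
  set κ : ℕ → ℕ := fun j => if hj : j ≤ m then Nat.find (hsub j hj) else 0 with hκ
  have hκspec : ∀ j (hj : j ≤ m), κ j ≤ n ∧ z (κ j) = y j := by
    intro j hj
    simp only [hκ, dif_pos hj]
    exact Nat.find_spec (hsub j hj)
  have hκmin : ∀ j (hj : j ≤ m) k, k < κ j → ¬(k ≤ n ∧ z k = y j) := by
    intro j hj k hk
    simp only [hκ, dif_pos hj] at hk
    exact Nat.find_min (hsub j hj) hk
  have hκmono : ∀ j < m, κ j ≤ κ (j + 1) := by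
    intro j hj
    by_contra hcon
    have h1 : κ (j + 1) < κ j := by omega
    have s1 := hκspec j (by omega)
    have s2 := hκspec (j + 1) (by omega)
    have hy1 : y (j + 1) ≤ y j := by
      rw [← s1.2, ← s2.2]
      exact div_mono hzmono _ _ h1.le s1.1
    have hyeq : y j = y (j + 1) := le_antisymm (hymono j hj) hy1
    exact hκmin j (by omega) (κ (j + 1)) h1 ⟨s2.1, by rw [s2.2, hyeq]⟩
  have hblock : ∀ j < m, |F (y (j + 1)) - F (y j)|
      ≤ ∑ k ∈ Finset.Ico (κ j) (κ (j + 1)), |F (z (k + 1)) - F (z k)| := by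
    intro j hj
    have htel : ∑ k ∈ Finset.Ico (κ j) (κ (j + 1)), (F (z (k + 1)) - F (z k))
        = F (y (j + 1)) - F (y j) := by
      rw [Finset.sum_Ico_eq_sub _ (hκmono j hj), Finset.sum_range_sub (fun k => F (z k)),
        Finset.sum_range_sub (fun k => F (z k)),
        (hκspec j (by omega)).2, (hκspec (j + 1) (by omega)).2]
      ring
    calc |F (y (j + 1)) - F (y j)| = |∑ k ∈ Finset.Ico (κ j) (κ (j + 1)),
          (F (z (k + 1)) - F (z k))| := by rw [htel]
      _ ≤ _ := Finset.abs_sum_le_sum_abs _ _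
  calc ∑ j ∈ Finset.range m, |F (y (j + 1)) - F (y j)|
      ≤ ∑ j ∈ Finset.range m, ∑ k ∈ Finset.Ico (κ j) (κ (j + 1)),
          |F (z (k + 1)) - F (z k)| :=
        Finset.sum_le_sum (fun j hj => hblock j (Finset.mem_range.1 hj))
    _ = ∑ k ∈ Finset.Ico (κ 0) (κ m), |F (z (k + 1)) - F (z k)| :=
        sum_blocks_eq _ _ m hκmono
    _ ≤ ∑ k ∈ Finset.range n, |F (z (k + 1)) - F (z k)| := by
        rw [Finset.range_eq_Ico]
        refine Finset.sum_le_sum_of_subset_of_nonneg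
          (Finset.Ico_subset_Ico (Nat.zero_le _) (hκspec m le_rfl).1)
          (fun k _ _ => abs_nonneg _)

end Div

section MainLemmas

variable {K : Type*} [LinearOrder K] [TopologicalSpace K] [OrderTopology K] [CompactSpace K]
  [BoundedOrder K] {G f F : K → ℝ}

lemma riemannSum_point' (f G : K → ℝ) (a b : K) (h : a = b) :
    riemannSum f G (TaggedPartition.point' a b h) = f a * G a := by
  simp [riemannSum, TaggedPartition.point']

lemma HasIntegral.unique {a b : K} (hab : a ≤ b) {f G : K → ℝ} {A B : ℝ}
    (hA : HasIntegral f G a b A) (hB : HasIntegral f G a b B) : A = B := by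
  by_contra hne
  have hpos : 0 < |A - B| / 2 := by
    have : A - B ≠ 0 := sub_ne_zero.2 hne
    positivity
  obtain ⟨δA, hδA, hA'⟩ := hA _ hpos
  obtain ⟨δB, hδB, hB'⟩ := hB _ hpos
  obtain ⟨P, hP⟩ := cousin hab (hδA.inter hδB)
  have h1 := hA' P (hP.mono' (fun x => Set.inter_subset_left))
  have h2 := hB' P (hP.mono' (fun x => Set.inter_subset_right))
  have key : |A - B| ≤ |riemannSum f G P - B| + |riemannSum f G P - A| := by
    have e : A - B = (riemannSum f G P - B) - (riemannSum f G P - A) := by ring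
    calc |A - B| = |(riemannSum f G P - B) - (riemannSum f G P - A)| := by rw [← e]
      _ ≤ _ := abs_sub _ _
  linarith

lemma hasIntegral_self {a : K} {f G : K → ℝ} {A : ℝ} (h : HasIntegral f G a a A) :
    A = f a * G a := by
  by_contra hne
  have hpos : 0 < |f a * G a - A| := abs_pos.2 (sub_ne_zero.2 (fun hh => hne hh.symm))
  obtain ⟨δ, hδ, h'⟩ := h _ hpos
  have := h' (TaggedPartition.point' a a rfl) (TaggedPartition.point'_isFine a a rfl δ)
  rw [riemannSum_point'] at this
  exact absurd this (lt_irrefl _)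

variable (hF : ∀ x : K, HasIntegral f G (⊥ : K) x (F x))

include hF in
lemma F_bot : F ⊥ = f ⊥ * G ⊥ := hasIntegral_self (hF ⊥)

include hF in
/-- The indefinite integral over a subinterval, via a Cauchy-type argument. -/
lemma exists_subinterval_gauge {u v : K} (huv : u ≤ v) {ε : ℝ} (hε : 0 < ε) :
    ∃ δ : K → Set K, IsGauge K u v δ ∧
      ∀ P : TaggedPartition K u v, P.IsFine δ → |P.ssum f G - (F v - F u)| < ε := by
  obtain ⟨δu, hδu, hu⟩ := hF u (ε / 2) (by positivity)
  obtain ⟨δv, hδv, hv⟩ := hF v (ε / 2) (by positivity)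
  have hsub1 : Set.Icc (⊥ : K) u ⊆ Set.Icc (⊥ : K) v := Set.Icc_subset_Icc le_rfl huv
  have hsub2 : Set.Icc u v ⊆ Set.Icc (⊥ : K) v := Set.Icc_subset_Icc bot_le le_rfl
  obtain ⟨P0, hP0⟩ := cousin bot_le (hδu.inter (hδv.restrict hsub1))
  have hP0u : P0.IsFine δu := hP0.mono' (fun x => Set.inter_subset_left)
  have hP0v : P0.IsFine δv :=
    hP0.mono' (fun x => (Set.inter_subset_right).trans Set.inter_subset_left)
  refine ⟨fun x => δv x ∩ Set.Icc u v, hδv.restrict hsub2, ?_⟩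
  intro P hP
  have hPv : P.IsFine δv := hP.mono' (fun x => Set.inter_subset_left)
  have h1 := hv (P0.trans P) (hP0v.trans hPv)
  have h2 := hu P0 hP0u
  rw [TaggedPartition.riemannSum_trans] at h1
  have e : P.ssum f G - (F v - F u)
      = (riemannSum f G P0 + P.ssum f G - F v) - (riemannSum f G P0 - F u) := by ring
  calc |P.ssum f G - (F v - F u)|
      ≤ |riemannSum f G P0 + P.ssum f G - F v| + |riemannSum f G P0 - F u| := by
        rw [e]; exact abs_sub _ _
    _ < ε / 2 + ε / 2 := add_lt_add h1 h2
    _ = ε := by ring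

include hF in
/-- Local Saks–Henstock-type estimate for a single tagged interval. -/
lemma exists_local_gauge {ε : ℝ} (hε : 0 < ε) :
    ∃ δ : K → Set K, IsGauge K (⊥ : K) ⊤ δ ∧
      ∀ u v τ : K, ∀ huv : u ≤ v, τ ∈ Set.Icc u v → Set.Ioc u v ⊆ δ τ →
        |f τ * (G v - G u) - (F v - F u)| ≤ 3 * ε := by
  obtain ⟨δ, hδ, hδP⟩ := hF ⊤ ε hε
  refine ⟨δ, hδ, ?_⟩
  intro u v τ huv hτ hIoc
  obtain ⟨δuv, hδuv, huv'⟩ := exists_subinterval_gauge hF huv hε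
  have hsubuv : Set.Icc u v ⊆ Set.Icc (⊥ : K) ⊤ := Set.Icc_subset_Icc bot_le le_top
  have hsub0 : Set.Icc (⊥ : K) u ⊆ Set.Icc (⊥ : K) ⊤ := Set.Icc_subset_Icc le_rfl le_top
  have hsub1 : Set.Icc v (⊤ : K) ⊆ Set.Icc (⊥ : K) ⊤ := Set.Icc_subset_Icc bot_le le_rfl
  obtain ⟨Q, hQ⟩ := cousin huv ((hδ.restrict hsubuv).inter hδuv)
  have hQδ : Q.IsFine δ := hQ.mono' (fun x => Set.inter_subset_left.trans Set.inter_subset_left)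
  have hQuv : Q.IsFine δuv := hQ.mono' (fun x => Set.inter_subset_right)
  obtain ⟨P0, hP0⟩ := cousin (bot_le : (⊥ : K) ≤ u) (hδ.restrict hsub0)
  obtain ⟨P1, hP1⟩ := cousin (le_top : v ≤ (⊤ : K)) (hδ.restrict hsub1)
  have hP0δ : P0.IsFine δ := hP0.mono' (fun x => Set.inter_subset_left)
  have hP1δ : P1.IsFine δ := hP1.mono' (fun x => Set.inter_subset_left)
  set Sgl := TaggedPartition.single u v huv τ hτ with hSgl
  have hSfine : Sgl.IsFine δ := TaggedPartition.single_isFine huv hτ hIoc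
  have hA := hδP ((P0.trans Sgl).trans P1) ((hP0δ.trans hSfine).trans hP1δ)
  have hB := hδP ((P0.trans Q).trans P1) ((hP0δ.trans hQδ).trans hP1δ)
  rw [TaggedPartition.riemannSum_trans, TaggedPartition.riemannSum_trans] at hA hB
  have hQc := huv' Q hQuv
  have hsgl : Sgl.ssum f G = f τ * (G v - G u) := TaggedPartition.single_ssum huv hτ f G
  have e : f τ * (G v - G u) - (F v - F u)
      = (riemannSum f G P0 + Sgl.ssum f G + P1.ssum f G - F ⊤)
        - (riemannSum f G P0 + Q.ssum f G + P1.ssum f G - F ⊤)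
        + (Q.ssum f G - (F v - F u)) := by rw [hsgl]; ring
  calc |f τ * (G v - G u) - (F v - F u)|
      ≤ |(riemannSum f G P0 + Sgl.ssum f G + P1.ssum f G - F ⊤)
          - (riemannSum f G P0 + Q.ssum f G + P1.ssum f G - F ⊤)|
        + |Q.ssum f G - (F v - F u)| := by rw [e]; exact abs_add_le _ _
    _ ≤ |riemannSum f G P0 + Sgl.ssum f G + P1.ssum f G - F ⊤|
        + |riemannSum f G P0 + Q.ssum f G + P1.ssum f G - F ⊤|
        + |Q.ssum f G - (F v - F u)| := by
          have := abs_sub (riemannSum f G P0 + Sgl.ssum f G + P1.ssum f G - F ⊤)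
            (riemannSum f G P0 + Q.ssum f G + P1.ssum f G - F ⊤)
          linarith
    _ ≤ ε + ε + ε := by
          have h1 := le_of_lt hA
          have h2 := le_of_lt hB
          have h3 := le_of_lt hQc
          linarith
    _ = 3 * ε := by ring

include hF in
/-- Saks–Henstock-type estimate: the sum of deviations is small for fine partitions. -/
lemma exists_SH_gauge {ε : ℝ} (hε : 0 < ε) :
    ∃ δ : K → Set K, IsGauge K (⊥ : K) ⊤ δ ∧
      ∀ P : TaggedPartition K ⊥ ⊤, P.IsFine δ →
        ∑ i ∈ Finset.range P.n,
          |f (P.t (i + 1)) * (G (P.x (i + 1)) - G (P.x i)) - (F (P.x (i + 1)) - F (P.x i))|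
          ≤ 4 * ε := by
  classical
  obtain ⟨δ, hδ, hδP⟩ := hF ⊤ ε hε
  refine ⟨δ, hδ, ?_⟩
  intro P hP
  set n := P.n with hn
  set E : ℕ → ℝ := fun i =>
    f (P.t (i + 1)) * (G (P.x (i + 1)) - G (P.x i)) - (F (P.x (i + 1)) - F (P.x i)) with hE
  show ∑ i ∈ Finset.range n, |E i| ≤ 4 * ε
  have hQ : ∀ i, i < n → ∃ Q : TaggedPartition K (P.x i) (P.x (i + 1)), Q.IsFine δ ∧
      |Q.ssum f G - (F (P.x (i + 1)) - F (P.x i))| ≤ ε / (n + 1) := by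
    intro i hi
    have hx : P.x i ≤ P.x (i + 1) := P.mono i hi
    obtain ⟨δi, hδi, hi'⟩ := exists_subinterval_gauge hF hx (ε := ε / (n + 1)) (by positivity)
    have hsub : Set.Icc (P.x i) (P.x (i + 1)) ⊆ Set.Icc (⊥ : K) ⊤ :=
      Set.Icc_subset_Icc bot_le le_top
    obtain ⟨Q, hQf⟩ := cousin hx ((hδ.restrict hsub).inter hδi)
    exact ⟨Q, hQf.mono' (fun x => Set.inter_subset_left.trans Set.inter_subset_left),
      (hi' Q (hQf.mono' (fun x => Set.inter_subset_right))).le⟩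
  choose Q hQfine hQclose using hQ
  have claim : ∀ S : Finset ℕ, S ⊆ Finset.range n → |∑ i ∈ S, E i| ≤ 2 * ε := by
    intro S hS
    set v : ℕ → ℝ := fun i =>
      if hi : i < n then
        (if i ∈ S then f (P.t (i + 1)) * (G (P.x (i + 1)) - G (P.x i)) else (Q i hi).ssum f G)
      else 0 with hv
    set w : ℕ → ℝ := fun i =>
      if hi : i < n then (Q i hi).ssum f G - (F (P.x (i + 1)) - F (P.x i)) else 0 with hw
    have key : ∀ k, k ≤ n → ∃ R : TaggedPartition K ⊥ (P.x k), R.IsFine δ ∧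
        R.ssum f G = ∑ i ∈ Finset.range k, v i := by
      intro k
      induction k with
      | zero =>
          intro _
          exact ⟨TaggedPartition.point' ⊥ (P.x 0) P.x_zero.symm,
            TaggedPartition.point'_isFine _ _ _ _,
            by rw [TaggedPartition.point'_ssum]; simp⟩
      | succ k ih =>
          intro hk
          obtain ⟨R, hRf, hRs⟩ := ih (by omega)
          have hkn : k < n := by omega
          by_cases hkS : k ∈ S
          · refine ⟨R.trans (TaggedPartition.single (P.x k) (P.x (k + 1)) (P.mono k hkn)
              (P.t (k + 1)) (P.tag_mem k hkn)),
              hRf.trans (TaggedPartition.single_isFine _ _ (hP k hkn)), ?_⟩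
            rw [TaggedPartition.ssum_trans, hRs, TaggedPartition.single_ssum,
              Finset.sum_range_succ]
            congr 1
            rw [hv]; simp only [dif_pos hkn, if_pos hkS]
          · refine ⟨R.trans (Q k hkn), hRf.trans (hQfine k hkn), ?_⟩
            rw [TaggedPartition.ssum_trans, hRs, Finset.sum_range_succ]
            congr 1
            rw [hv]; simp only [dif_pos hkn, if_neg hkS]
    obtain ⟨R0, hR0f, hR0s⟩ := key n le_rfl
    have pack : ∃ R : TaggedPartition K ⊥ (P.x n), R.IsFine δ ∧
        R.ssum f G = ∑ i ∈ Finset.range n, v i := ⟨R0, hR0f, hR0s⟩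
    have hxl : P.x n = ⊤ := P.x_last
    rw [hxl] at pack
    obtain ⟨R, hRf, hRs⟩ := pack
    have h1 := hδP R hRf
    rw [TaggedPartition.riemannSum_eq_ssum, hRs] at h1
    have hFb : F ⊥ = f ⊥ * G ⊥ := F_bot hF
    have htel : ∑ i ∈ Finset.range n, (F (P.x (i + 1)) - F (P.x i)) = F ⊤ - F ⊥ := by
      rw [Finset.sum_range_sub (fun i => F (P.x i)) n, hxl, P.x_zero]
    have hsum : ∑ i ∈ Finset.range n, v i - (F ⊤ - F ⊥)
        = ∑ i ∈ S, E i + ∑ i ∈ (Finset.range n).filter (fun i => i ∉ S), w i := by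
      rw [← htel, ← Finset.sum_sub_distrib,
        ← Finset.sum_filter_add_sum_filter_not (Finset.range n) (fun i => i ∈ S)]
      congr 1
      · rw [Finset.filter_mem_eq_inter, Finset.inter_eq_right.2 hS]
        apply Finset.sum_congr rfl
        intro i hi
        have hi' : i < n := Finset.mem_range.1 (hS hi)
        rw [hv, hE]
        simp only [dif_pos hi', if_pos hi]
      · apply Finset.sum_congr rfl
        intro i hi
        rw [Finset.mem_filter] at hi
        have hi' : i < n := Finset.mem_range.1 hi.1
        rw [hv, hw]
        simp only [dif_pos hi', if_neg hi.2]
    have hwbound : |∑ i ∈ (Finset.range n).filter (fun i => i ∉ S), w i| ≤ ε := by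
      calc |∑ i ∈ (Finset.range n).filter (fun i => i ∉ S), w i|
          ≤ ∑ i ∈ (Finset.range n).filter (fun i => i ∉ S), |w i| :=
            Finset.abs_sum_le_sum_abs _ _
        _ ≤ ∑ _i ∈ (Finset.range n).filter (fun i => i ∉ S), (ε / (n + 1)) := by
            apply Finset.sum_le_sum
            intro i hi
            rw [Finset.mem_filter] at hi
            have hi' : i < n := Finset.mem_range.1 hi.1
            rw [hw]; simp only [dif_pos hi']
            exact hQclose i hi'
        _ = ((Finset.range n).filter (fun i => i ∉ S)).card * (ε / (n + 1)) := by
            rw [Finset.sum_const, nsmul_eq_mul]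
        _ ≤ n * (ε / (n + 1)) := by
            apply mul_le_mul_of_nonneg_right _ (by positivity)
            have := (Finset.card_filter_le (Finset.range n) (fun i => i ∉ S)).trans
              (le_of_eq (Finset.card_range n))
            exact_mod_cast this
        _ ≤ ε := by
            rw [mul_div_assoc']
            rw [div_le_iff₀ (by positivity)]
            nlinarith [hε]
    have h1' : |∑ i ∈ Finset.range n, v i - (F ⊤ - F ⊥)| < ε := by
      have e : ∑ i ∈ Finset.range n, v i - (F ⊤ - F ⊥)
          = f ⊥ * G ⊥ + ∑ i ∈ Finset.range n, v i - F ⊤ := by rw [hFb]; ring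
      rw [e]; exact h1
    calc |∑ i ∈ S, E i|
        ≤ |∑ i ∈ Finset.range n, v i - (F ⊤ - F ⊥)|
          + |∑ i ∈ (Finset.range n).filter (fun i => i ∉ S), w i| := by
          have e : ∑ i ∈ S, E i = (∑ i ∈ Finset.range n, v i - (F ⊤ - F ⊥))
              - ∑ i ∈ (Finset.range n).filter (fun i => i ∉ S), w i := by
            rw [hsum]; ring
          rw [e]; exact abs_sub _ _
      _ ≤ ε + ε := add_le_add h1'.le hwbound
      _ = 2 * ε := by ring
  set Sp := (Finset.range n).filter (fun i => 0 ≤ E i) with hSp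
  set Sm := (Finset.range n).filter (fun i => ¬ 0 ≤ E i) with hSm
  have hsplit : ∑ i ∈ Finset.range n, |E i| = ∑ i ∈ Sp, E i + ∑ i ∈ Sm, (- E i) := by
    rw [← Finset.sum_filter_add_sum_filter_not (Finset.range n) (fun i => 0 ≤ E i)
      (fun i => |E i|)]
    congr 1
    · apply Finset.sum_congr rfl
      intro i hi
      rw [Finset.mem_filter] at hi
      exact abs_of_nonneg hi.2
    · apply Finset.sum_congr rfl
      intro i hi
      rw [Finset.mem_filter] at hi
      exact abs_of_neg (not_le.1 hi.2)
  have hp := claim Sp (Finset.filter_subset _ _)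
  have hm := claim Sm (Finset.filter_subset _ _)
  have e1 : ∑ i ∈ Sp, E i ≤ 2 * ε := (le_abs_self _).trans hp
  have e2 : ∑ i ∈ Sm, (- E i) ≤ 2 * ε := by
    rw [Finset.sum_neg_distrib]
    exact (neg_le_abs _).trans hm
  rw [hsplit]
  linarith

lemma IsGauge.mem_nhds {δ : K → Set K} (hδ : IsGauge K (⊥ : K) ⊤ δ) (x : K) : δ x ∈ nhds x := by
  obtain ⟨hm, _, U, hU, he⟩ := hδ x ⟨bot_le, le_top⟩
  have hm' : x ∈ U := by rw [he] at hm; exact hm.1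
  rw [he, Set.Icc_bot_top, Set.inter_univ]
  exact hU.mem_nhds hm'

lemma IsGauge.ordConnected {δ : K → Set K} (hδ : IsGauge K (⊥ : K) ⊤ δ) (x : K) :
    (δ x).OrdConnected := (hδ x ⟨bot_le, le_top⟩).2.1

lemma IsGauge.self_mem {δ : K → Set K} (hδ : IsGauge K (⊥ : K) ⊤ δ) (x : K) : x ∈ δ x :=
  (hδ x ⟨bot_le, le_top⟩).1

include hF in
lemma amenable_primitive (hGam : Amenable G) : Amenable F := by
  have hRC : ∀ x : K, ContinuousWithinAt F (Set.Ici x) x := by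
    intro x
    rw [ContinuousWithinAt, Metric.tendsto_nhds]
    intro ε hε
    obtain ⟨δ, hδ, hloc⟩ := exists_local_gauge hF (ε := ε / 8) (by positivity)
    set c : ℝ := |f x| + 1 with hc
    have hcpos : 0 < c := by positivity
    have hGx : ∀ᶠ y in nhdsWithin x (Set.Ici x), dist (G y) (G x) < ε / (2 * c) :=
      (Metric.tendsto_nhds.1 (hGam.1 x)) _ (by positivity)
    have hδmem : ∀ᶠ y in nhdsWithin x (Set.Ici x), y ∈ δ x :=
      mem_nhdsWithin_of_mem_nhds (hδ.mem_nhds x)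
    have hIci : ∀ᶠ y in nhdsWithin x (Set.Ici x), y ∈ Set.Ici x := self_mem_nhdsWithin
    filter_upwards [hGx, hδmem, hIci] with y hG hyδ hyx
    rcases eq_or_lt_of_le (hyx : x ≤ y) with rfl | hlt
    · simpa using hε
    · have hIoc : Set.Ioc x y ⊆ δ x := fun z hz =>
        (hδ.ordConnected x).out (hδ.self_mem x) hyδ ⟨hz.1.le, hz.2⟩
      have hest := hloc x y x hlt.le ⟨le_rfl, hlt.le⟩ hIoc
      rw [Real.dist_eq] at hG ⊢
      have h1 : |F y - F x| ≤ |f x| * |G y - G x| + 3 * (ε / 8) := by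
        have e : F y - F x = f x * (G y - G x) - (f x * (G y - G x) - (F y - F x)) := by ring
        calc |F y - F x| ≤ |f x * (G y - G x)| + |f x * (G y - G x) - (F y - F x)| := by
              have tri := abs_sub (f x * (G y - G x)) (f x * (G y - G x) - (F y - F x))
              rw [← e] at tri
              exact tri
          _ ≤ |f x| * |G y - G x| + 3 * (ε / 8) := by
              rw [abs_mul]; exact add_le_add le_rfl hest
      have h2 : |f x| * |G y - G x| ≤ c * (ε / (2 * c)) := by
        apply mul_le_mul (by rw [hc]; linarith [abs_nonneg (f x)]) hG.le (abs_nonneg _) hcpos.le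
      have h3 : c * (ε / (2 * c)) = ε / 2 := by field_simp; try ring
      calc |F y - F x| ≤ c * (ε / (2 * c)) + 3 * (ε / 8) := by linarith
        _ < ε := by rw [h3]; linarith
  refine ⟨hRC, ?_, ?_⟩
  · -- left limits
    intro x hx0 hnopred
    have hneBot : (nhdsWithin x (Set.Iio x)).NeBot := by
      rw [← mem_closure_iff_nhdsWithin_neBot]
      rw [mem_closure_iff]
      intro U hU hxU
      obtain ⟨l, hlx, hIoc⟩ := exists_Ioc_subset_of_mem_nhds (hU.mem_nhds hxU)
        ⟨⊥, bot_lt_iff_ne_bot.2 hx0⟩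
      obtain ⟨m, hlm, hmx⟩ := (not_covBy_iff hlx).1 (fun h => hnopred ⟨l, h⟩)
      exact ⟨m, hIoc ⟨hlm, hmx.le⟩, hmx⟩
    obtain ⟨gl, hgl⟩ := hGam.2.1 x hx0 hnopred
    have hcauchy : Cauchy (Filter.map F (nhdsWithin x (Set.Iio x))) := by
      rw [Metric.cauchy_iff]
      refine ⟨Filter.map_neBot, ?_⟩
      intro ε hε
      set c : ℝ := |f x| + 1 with hc
      have hcpos : 0 < c := by positivity
      obtain ⟨δ, hδ, hloc⟩ := exists_local_gauge hF (ε := ε / 16) (by positivity)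
      set s : Set K := {y | y ∈ δ x ∧ y < x ∧ |G y - gl| < ε / (8 * c)} with hs
      have hsmem : s ∈ nhdsWithin x (Set.Iio x) := by
        have h1 : ∀ᶠ y in nhdsWithin x (Set.Iio x), y ∈ δ x :=
          mem_nhdsWithin_of_mem_nhds (hδ.mem_nhds x)
        have h2 : ∀ᶠ y in nhdsWithin x (Set.Iio x), y < x := self_mem_nhdsWithin
        have h3 : ∀ᶠ y in nhdsWithin x (Set.Iio x), |G y - gl| < ε / (8 * c) := by
          have := (Metric.tendsto_nhds.1 hgl) _ (show (0:ℝ) < ε / (8 * c) by positivity)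
          filter_upwards [this] with y hy using by rwa [Real.dist_eq] at hy
        filter_upwards [h1, h2, h3] with y a b c using ⟨a, b, c⟩
      refine ⟨F '' s, Filter.image_mem_map hsmem, ?_⟩
      rintro p ⟨y, hy, rfl⟩ q ⟨y', hy', rfl⟩
      obtain ⟨hyδ, hyx, hyG⟩ := hy
      obtain ⟨hy'δ, hy'x, hy'G⟩ := hy'
      have est : ∀ z : K, z ∈ δ x → z < x → |f x * (G x - G z) - (F x - F z)| ≤ 3 * (ε / 16) := by
        intro z hzδ hzx
        have hIoc : Set.Ioc z x ⊆ δ x := fun w hw =>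
          (hδ.ordConnected x).out hzδ (hδ.self_mem x) ⟨hw.1.le, hw.2⟩
        exact hloc z x x hzx.le ⟨hzx.le, le_rfl⟩ hIoc
      have e1 := est y hyδ hyx
      have e2 := est y' hy'δ hy'x
      rw [Real.dist_eq]
      have eG : |G y - G y'| ≤ ε / (4 * c) := by
        have : G y - G y' = (G y - gl) - (G y' - gl) := by ring
        calc |G y - G y'| ≤ |G y - gl| + |G y' - gl| := by rw [this]; exact abs_sub _ _
          _ ≤ ε / (8 * c) + ε / (8 * c) := add_le_add hyG.le hy'G.le
          _ = ε / (4 * c) := by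
              rw [← add_div]
              rw [show ε + ε = 2 * ε by ring, show (8:ℝ) * c = 2 * (4 * c) by ring,
                mul_div_mul_left _ _ (two_ne_zero)]
      have key : F y - F y' = f x * (G y - G y')
          + ((f x * (G x - G y) - (F x - F y)) - (f x * (G x - G y') - (F x - F y'))) := by ring
      calc |F y - F y'| ≤ |f x * (G y - G y')|
            + |(f x * (G x - G y) - (F x - F y)) - (f x * (G x - G y') - (F x - F y'))| := by
            rw [key]; exact abs_add_le _ _
        _ ≤ |f x| * |G y - G y'| + (3 * (ε / 16) + 3 * (ε / 16)) := by
            rw [abs_mul]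
            refine add_le_add le_rfl ?_
            calc |(f x * (G x - G y) - (F x - F y)) - (f x * (G x - G y') - (F x - F y'))|
                ≤ |f x * (G x - G y) - (F x - F y)| + |f x * (G x - G y') - (F x - F y')| :=
                  abs_sub _ _
              _ ≤ 3 * (ε / 16) + 3 * (ε / 16) := add_le_add e1 e2
        _ ≤ c * (ε / (4 * c)) + 6 * (ε / 16) := by
            have : |f x| * |G y - G y'| ≤ c * (ε / (4 * c)) :=
              mul_le_mul (by rw [hc]; linarith [abs_nonneg (f x)]) eG (abs_nonneg _) hcpos.le
            linarith
        _ < ε := by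
            have : c * (ε / (4 * c)) = ε / 4 := by field_simp; try ring
            rw [this]; linarith
    obtain ⟨l, hl⟩ := CompleteSpace.complete hcauchy
    exact ⟨l, hl⟩
  · -- right limits: follow from right continuity
    intro x _ _
    exact ⟨F x, (hRC x).mono_left (nhdsWithin_mono x Set.Ioi_subset_Ici_self)⟩

omit hF in
lemma varsum_mem (P : TaggedPartition K (⊥ : K) ⊤) :
    (∑ i ∈ Finset.range P.n, |F (P.x (i + 1)) - F (P.x i)|) ∈ varSums F (⊥ : K) ⊤ :=
  ⟨P.n, P.x, P.x_zero, P.x_last, P.mono, rfl⟩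

omit hF in
lemma ssum_abs_sub_varsum (hGmono : Monotone G) (F₀ : K → ℝ) (P : TaggedPartition K (⊥ : K) ⊤) :
    abs (P.ssum (fun x => |f x|) G
        - ∑ i ∈ Finset.range P.n, |F₀ (P.x (i + 1)) - F₀ (P.x i)|)
      ≤ ∑ i ∈ Finset.range P.n,
          |f (P.t (i + 1)) * (G (P.x (i + 1)) - G (P.x i)) - (F₀ (P.x (i + 1)) - F₀ (P.x i))| := by
  rw [TaggedPartition.ssum, ← Finset.sum_sub_distrib]
  refine (Finset.abs_sum_le_sum_abs _ _).trans (Finset.sum_le_sum ?_)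
  intro i hi
  have hGd : 0 ≤ G (P.x (i + 1)) - G (P.x i) :=
    sub_nonneg.2 (hGmono (P.mono i (Finset.mem_range.1 hi)))
  have e : (fun x => |f x|) (P.t (i + 1)) * (G (P.x (i + 1)) - G (P.x i))
      = |f (P.t (i + 1)) * (G (P.x (i + 1)) - G (P.x i))| := by
    rw [abs_mul, abs_of_nonneg hGd]
  rw [e]
  exact abs_abs_sub_abs_le_abs_sub _ _

/-- Construct a fine partition whose division passes through given points. -/
lemma exists_fine_through {δ : K → Set K} (hδ : IsGauge K (⊥ : K) ⊤ δ)
    {m : ℕ} {y : ℕ → K} (h0 : y 0 = ⊥) (hm : y m = ⊤) (hmono : ∀ j < m, y j ≤ y (j + 1)) :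
    ∃ P : TaggedPartition K (⊥ : K) ⊤, P.IsFine δ ∧ ∀ j ≤ m, ∃ k, k ≤ P.n ∧ P.x k = y j := by
  have key : ∀ j, j ≤ m → ∃ P : TaggedPartition K ⊥ (y j), P.IsFine δ ∧
      ∀ j' ≤ j, ∃ k, k ≤ P.n ∧ P.x k = y j' := by
    intro j
    induction j with
    | zero =>
        intro _
        refine ⟨TaggedPartition.point' ⊥ (y 0) h0.symm,
          TaggedPartition.point'_isFine _ _ _ _, ?_⟩
        intro j' hj'
        have : j' = 0 := by omega
        subst this
        exact ⟨0, le_rfl, h0.symm⟩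
    | succ j ih =>
        intro hj
        obtain ⟨P, hPf, hPk⟩ := ih (by omega)
        have hyj : y j ≤ y (j + 1) := hmono j (by omega)
        have hsub : Set.Icc (y j) (y (j + 1)) ⊆ Set.Icc (⊥ : K) ⊤ :=
          Set.Icc_subset_Icc bot_le le_top
        obtain ⟨Q, hQ⟩ := cousin hyj (hδ.restrict hsub)
        refine ⟨P.trans Q, hPf.trans (hQ.mono' fun x => Set.inter_subset_left), ?_⟩
        intro j' hj'
        rcases Nat.lt_or_ge j' (j + 1) with h | h
        · obtain ⟨k, hk, hke⟩ := hPk j' (by omega)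
          refine ⟨k, by rw [TaggedPartition.trans_n]; omega, ?_⟩
          rw [TaggedPartition.trans_x_of_le P Q hk]; exact hke
        · have : j' = j + 1 := by omega
          subst this
          exact ⟨(P.trans Q).n, le_rfl, (P.trans Q).x_last⟩
  obtain ⟨P, h1, h2⟩ := key m le_rfl
  have pack : ∃ P : TaggedPartition K ⊥ (y m), P.IsFine δ ∧
      ∀ j ≤ m, ∃ k, k ≤ P.n ∧ P.x k = y j := ⟨P, h1, h2⟩
  rw [hm] at pack
  exact pack

include hF in
lemma bddAbove_varSums (hGmono : Monotone G) {B : ℝ}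
    (hB : HasIntegral (fun x => |f x|) G (⊥ : K) ⊤ B) : BddAbove (varSums F (⊥ : K) ⊤) := by
  refine ⟨B + 1 - |f ⊥| * G ⊥ + 4, ?_⟩
  rintro v ⟨m, y, h0, hm, hymono, rfl⟩
  obtain ⟨δ1, hδ1, hB'⟩ := hB 1 one_pos
  obtain ⟨δ0, hδ0, hSH⟩ := exists_SH_gauge hF one_pos
  obtain ⟨P, hPf, hPk⟩ := exists_fine_through (hδ1.inter hδ0) h0 hm hymono
  have hP1 : P.IsFine δ1 := hPf.mono' fun x => Set.inter_subset_left
  have hP0 : P.IsFine δ0 := hPf.mono' fun x => Set.inter_subset_right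
  have hv : ∑ j ∈ Finset.range m, |F (y (j + 1)) - F (y j)|
      ≤ ∑ k ∈ Finset.range P.n, |F (P.x (k + 1)) - F (P.x k)| :=
    varsum_le_varsum_of_subdiv F hymono P.mono (fun j hj => hPk j hj)
  have hSH' := hSH P hP0
  have hclose := ssum_abs_sub_varsum (f := f) hGmono F P
  have hRS := hB' P hP1
  rw [TaggedPartition.riemannSum_eq_ssum] at hRS
  have h1 : ∑ k ∈ Finset.range P.n, |F (P.x (k + 1)) - F (P.x k)|
      ≤ P.ssum (fun x => |f x|) G + 4 * 1 := by
    have := abs_le.1 hclose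
    linarith
  have h2 : P.ssum (fun x => |f x|) G < B + 1 - |f ⊥| * G ⊥ := by
    have h := abs_lt.1 hRS
    have hbeta : (fun x => |f x|) (⊥ : K) * G ⊥ = |f ⊥| * G ⊥ := rfl
    linarith [h.2, hbeta.le, hbeta.ge]
  linarith

/-- A gauge component avoiding a finite set of division points. -/
def avoidGauge (D : Finset K) (x : K) : Set K :=
  {z | (∀ d ∈ D, d < x → d < z) ∧ (∀ d ∈ D, x < d → z < d)}

lemma avoidGauge_self (D : Finset K) (x : K) : x ∈ avoidGauge D x :=
  ⟨fun _ _ h => h, fun _ _ h => h⟩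

lemma avoidGauge_isOpen (D : Finset K) (x : K) : IsOpen (avoidGauge D x) := by
  classical
  have he : avoidGauge D x
      = (⋂ d ∈ D.filter (fun d => d < x), Set.Ioi d)
        ∩ (⋂ d ∈ D.filter (fun d => x < d), Set.Iio d) := by
    ext z
    simp only [avoidGauge, Set.mem_setOf_eq, Set.mem_inter_iff, Set.mem_iInter,
      Finset.mem_filter, Set.mem_Ioi, Set.mem_Iio]
    constructor
    · rintro ⟨h1, h2⟩
      exact ⟨fun d hd => h1 d hd.1 hd.2, fun d hd => h2 d hd.1 hd.2⟩
    · rintro ⟨h1, h2⟩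
      exact ⟨fun d hd hdx => h1 d ⟨hd, hdx⟩, fun d hd hxd => h2 d ⟨hd, hxd⟩⟩
  rw [he]
  exact (isOpen_biInter_finset (fun d _ => isOpen_Ioi)).inter
    (isOpen_biInter_finset (fun d _ => isOpen_Iio))

lemma avoidGauge_ordConnected (D : Finset K) (x : K) : (avoidGauge D x).OrdConnected := by
  constructor
  rintro p ⟨hp1, hp2⟩ q ⟨hq1, hq2⟩ z hz
  exact ⟨fun d hd hdx => lt_of_lt_of_le (hp1 d hd hdx) hz.1,
    fun d hd hxd => lt_of_le_of_lt hz.2 (hq2 d hd hxd)⟩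

lemma avoidGauge_eq_of_mem {D : Finset K} {x z : K} (hz : z ∈ avoidGauge D x)
    (hzD : z ∈ D) : z = x := by
  rcases lt_trichotomy z x with h | h | h
  · exact absurd (hz.1 z hzD h) (lt_irrefl z)
  · exact h
  · exact absurd (hz.2 z hzD h) (lt_irrefl z)

lemma IsGauge.inter_avoid {δ : K → Set K} (hδ : IsGauge K (⊥ : K) ⊤ δ) (D : Finset K) :
    IsGauge K (⊥ : K) ⊤ (fun x => δ x ∩ avoidGauge D x) := by
  intro x hx
  obtain ⟨hm, hc, U, hU, he⟩ := hδ x hx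
  refine ⟨⟨hm, avoidGauge_self D x⟩, hc.inter (avoidGauge_ordConnected D x),
    U ∩ avoidGauge D x, hU.inter (avoidGauge_isOpen D x), ?_⟩
  show δ x ∩ avoidGauge D x = _
  rw [he]
  ext z; simp only [Set.mem_inter_iff]; tauto

include hF in
lemma hasIntegral_abs (hGmono : Monotone G) (hBdd : BddAbove (varSums F (⊥ : K) ⊤)) :
    HasIntegral (fun x => |f x|) G (⊥ : K) ⊤ (|f ⊥| * G ⊥ + sSup (varSums F (⊥ : K) ⊤)) := by
  classical
  intro ε hε
  set V := sSup (varSums F (⊥ : K) ⊤) with hV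
  have hne : (varSums F (⊥ : K) ⊤).Nonempty := by
    refine ⟨|F ⊤ - F ⊥|, 1, fun i => if i = 0 then ⊥ else ⊤, if_pos rfl, if_neg one_ne_zero, ?_, ?_⟩
    · intro i hi
      have : i = 0 := by omega
      subst this
      simp
    · simp
  obtain ⟨vd, hvd_mem, hvd⟩ := exists_lt_of_lt_csSup hne
    (show V - ε / 4 < V by linarith)
  obtain ⟨m, y, h0, hm, hymono, hveq⟩ := hvd_mem
  set D : Finset K := (Finset.range (m + 1)).image y with hD
  obtain ⟨δ0, hδ0, hSH⟩ := exists_SH_gauge hF (ε := ε / 32) (by positivity)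
  refine ⟨fun x => δ0 x ∩ avoidGauge D x, hδ0.inter_avoid D, ?_⟩
  intro P hPf
  have hP0 : P.IsFine δ0 := hPf.mono' fun x => Set.inter_subset_left
  set T := P.ssum (fun x => |f x|) G with hT
  have hgoal : riemannSum (fun x => |f x|) G P - (|f ⊥| * G ⊥ + V) = T - V := by
    rw [TaggedPartition.riemannSum_eq_ssum]
    have hbeta : (fun x => |f x|) (⊥ : K) * G ⊥ = |f ⊥| * G ⊥ := rfl
    rw [hT, hbeta]; ring
  rw [hgoal, abs_lt]
  -- upper bound
  have hupper : T ≤ V + ε / 8 := by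
    have hclose := ssum_abs_sub_varsum (f := f) hGmono F P
    have hSH' := hSH P hP0
    have hmem := varsum_mem (F := F) P
    have hle : ∑ i ∈ Finset.range P.n, |F (P.x (i + 1)) - F (P.x i)| ≤ V :=
      le_csSup hBdd hmem
    have := abs_le.1 hclose
    have h4 : (4 : ℝ) * (ε / 32) = ε / 8 := by ring
    linarith [this.1, this.2]
  -- lower bound
  have hlower : V - ε / 4 - ε / 8 ≤ T := by
    set P' := P.split with hP'
    have hP'0 : P'.IsFine δ0 := hP0.split
    have hT' : P'.ssum (fun x => |f x|) G = T := TaggedPartition.ssum_split P _ _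
    have hclose := ssum_abs_sub_varsum (f := f) hGmono F P'
    have hSH' := hSH P' hP'0
    have hsubdiv : ∀ j ≤ m, ∃ k, k ≤ P'.n ∧ P'.x k = y j := by
      intro j hj
      have hyD : y j ∈ D := Finset.mem_image.2 ⟨j, Finset.mem_range.2 (by omega), rfl⟩
      rcases eq_or_lt_of_le (bot_le : (⊥ : K) ≤ y j) with hbot | hbot
      · exact ⟨0, Nat.zero_le _, by rw [P'.x_zero, hbot]⟩
      · have hyle : y j ≤ P.x P.n := by rw [P.x_last]; exact le_top
        have hygt : P.x 0 < y j := by rw [P.x_zero]; exact hbot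
        obtain ⟨i, hi, hlt, hle⟩ := exists_mem_Ioc_div P.mono hygt hyle
        have hyIoc : y j ∈ Set.Ioc (P.x i) (P.x (i + 1)) := ⟨hlt, hle⟩
        have hyδ := hPf i hi hyIoc
        have : y j = P.t (i + 1) := avoidGauge_eq_of_mem hyδ.2 hyD
        refine ⟨2 * i + 1, ?_, ?_⟩
        · rw [TaggedPartition.split_n]; omega
        · rw [TaggedPartition.split_x_odd, ← this]
    have hvar : vd ≤ ∑ k ∈ Finset.range P'.n, |F (P'.x (k + 1)) - F (P'.x k)| := by
      rw [hveq]
      exact varsum_le_varsum_of_subdiv F hymono P'.mono hsubdiv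
    have := abs_le.1 hclose
    have h4 : (4 : ℝ) * (ε / 32) = ε / 8 := by ring
    rw [hT'] at this
    linarith [this.1, this.2, hvd]
  constructor
  · linarith
  · linarith

end MainLemmas

end Infra

theorem abs_integrable_iff_primitive_NBV {K : Type*} [LinearOrder K] [TopologicalSpace K]
    [OrderTopology K] [CompactSpace K] [BoundedOrder K] (G f : K → ℝ)
    (hGmono : Monotone G) (hGam : Amenable G)
    (F : K → ℝ) (hF : ∀ x : K, HasIntegral f G (⊥ : K) x (F x)) :
    ((∃ B, HasIntegral (fun x => |f x|) G (⊥ : K) ⊤ B) ↔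
      Amenable F ∧ BddAbove (varSums F (⊥ : K) ⊤)) ∧
    ∀ B, HasIntegral (fun x => |f x|) G (⊥ : K) ⊤ B →
      B = |f ⊥| * G ⊥ + sSup (varSums F (⊥ : K) ⊤) := by
  constructor
  · constructor
    · rintro ⟨B, hB⟩
      exact ⟨amenable_primitive hF hGam, bddAbove_varSums hF hGmono hB⟩
    · rintro ⟨-, hBdd⟩
      exact ⟨_, hasIntegral_abs hF hGmono hBdd⟩
  · intro B hB
    exact HasIntegral.unique bot_le hB
      (hasIntegral_abs hF hGmono (bddAbove_varSums hF hGmono hB))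
end

section
/- Comparison test: let K be a compact line and G : K → ℝ a nondecreasing amenable function. If f, g : K → ℝ are G-integrable and |f(x)| ≤ g(x) for every x ∈ K, then |f| is G-integrable. -/
open Set Filter MeasureTheory

section KSAux
set_option linter.unusedSectionVars false

variable {K : Type*} [LinearOrder K] [TopologicalSpace K] [OrderTopology K]
  [CompactSpace K]

lemma sum_range_two_mul (F : ℕ → ℝ) (n : ℕ) :
    ∑ j ∈ Finset.range (2 * n), F j = ∑ i ∈ Finset.range n, (F (2 * i) + F (2 * i + 1)) := by
  induction n with
  | zero => simp
  | succ n ih =>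
    have h2 : 2 * (n + 1) = (2 * n + 1) + 1 := by omega
    rw [h2, Finset.sum_range_succ, Finset.sum_range_succ, Finset.sum_range_succ, ih]
    ring

lemma chain_mono {n : ℕ} {x : ℕ → K} (hm : ∀ i < n, x i ≤ x (i + 1)) :
    ∀ {i j : ℕ}, i ≤ j → j ≤ n → x i ≤ x j := by
  intro i j hij hjn
  induction j with
  | zero => have : i = 0 := by omega
            rw [this]
  | succ j ih =>
    rcases Nat.lt_or_ge i (j + 1) with h | h
    · exact le_trans (ih (by omega) (by omega)) (hm j (by omega))
    · have : i = j + 1 := by omega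
      rw [this]

lemma TaggedPartition.cover {a b : K} (P : TaggedPartition K a b) {d : K}
    (hd : d ∈ Set.Icc a b) :
    d = a ∨ ∃ i < P.n, d ∈ Set.Ioc (P.x i) (P.x (i + 1)) := by
  classical
  by_cases h : d = a
  · exact Or.inl h
  · right
    have ha : a < d := lt_of_le_of_ne hd.1 (Ne.symm h)
    have hxn : d ≤ P.x P.n := by rw [P.x_last]; exact hd.2
    have hex : ∃ k, d ≤ P.x k := ⟨P.n, hxn⟩
    have hk : d ≤ P.x (Nat.find hex) := Nat.find_spec hex
    have hk0 : Nat.find hex ≠ 0 := by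
      intro h0
      rw [h0, P.x_zero] at hk
      exact absurd hk (not_le.mpr ha)
    have hkn : Nat.find hex ≤ P.n := Nat.find_min' hex hxn
    refine ⟨Nat.find hex - 1, by omega, ?_, ?_⟩
    · have hmin := Nat.find_min hex (m := Nat.find hex - 1) (by omega)
      exact not_le.mp hmin
    · have he : Nat.find hex - 1 + 1 = Nat.find hex := by omega
      rw [he]; exact hk

/-- trivial partition of `[c,c]`. -/
def TPtriv (c : K) : TaggedPartition K c c :=
  ⟨0, fun _ => c, fun _ => c, rfl, rfl,
    fun i hi => absurd hi (Nat.not_lt_zero i),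
    fun i hi => absurd hi (Nat.not_lt_zero i)⟩

lemma TPtriv_sum (f G : K → ℝ) (c : K) : riemannSum f G (TPtriv c) = f c * G c := by
  simp [riemannSum, TPtriv]

lemma TPtriv_fine (c : K) (δ : K → Set K) : (TPtriv c).IsFine δ :=
  fun i hi => absurd hi (Nat.not_lt_zero i)

/-- one-piece partition. -/
def TPsingle (u v τ : K) (huv : u ≤ v) (hτ : τ ∈ Set.Icc u v) : TaggedPartition K u v where
  n := 1
  x := fun i => if i = 0 then u else v
  t := fun _ => τ
  x_zero := rfl
  x_last := rfl
  mono := by intro i hi; have : i = 0 := by omega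
             subst this; simpa using huv
  tag_mem := by intro i hi; have : i = 0 := by omega
                subst this; simpa using hτ

lemma TPsingle_sum (f G : K → ℝ) (u v τ : K) (huv : u ≤ v) (hτ : τ ∈ Set.Icc u v) :
    riemannSum f G (TPsingle u v τ huv hτ) = f u * G u + f τ * (G v - G u) := by
  simp [riemannSum, TPsingle]

lemma TPsingle_fine {u v τ : K} (huv : u ≤ v) (hτ : τ ∈ Set.Icc u v) {δ : K → Set K}
    (h : Set.Ioc u v ⊆ δ τ) : (TPsingle u v τ huv hτ).IsFine δ := by
  intro i hi
  have hi' : i < 1 := hi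
  have : i = 0 := by omega
  subst this; simpa [TPsingle] using h

/-- cast endpoints of a partition. -/
def TPcast {a b a' b' : K} (P : TaggedPartition K a b) (ha : a = a') (hb : b = b') :
    TaggedPartition K a' b' :=
  ⟨P.n, P.x, P.t, ha ▸ P.x_zero, hb ▸ P.x_last, P.mono, P.tag_mem⟩

lemma TPcast_sum (f G : K → ℝ) {a b a' b' : K} (P : TaggedPartition K a b)
    (ha : a = a') (hb : b = b') :
    riemannSum f G (TPcast P ha hb) = riemannSum f G P := by
  subst ha; subst hb; rfl

lemma TPcast_fine {a b a' b' : K} {P : TaggedPartition K a b} {ha : a = a'} {hb : b = b'}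
    {δ : K → Set K} (h : P.IsFine δ) : (TPcast P ha hb).IsFine δ := by
  subst ha; subst hb; exact h

lemma fine_mono {a b : K} {P : TaggedPartition K a b} {δ1 δ2 : K → Set K}
    (hsub : ∀ x, δ1 x ⊆ δ2 x) (h : P.IsFine δ1) : P.IsFine δ2 :=
  fun i hi => (h i hi).trans (hsub _)

end KSAux
section KSAux2
set_option linter.unusedSectionVars false
variable {K : Type*} [LinearOrder K] [TopologicalSpace K] [OrderTopology K]
  [CompactSpace K]

namespace KSa

variable {u v w : K}

/-- division points of the concatenation -/
def appx (P : TaggedPartition K u v) (Q : TaggedPartition K v w) : ℕ → K :=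
  fun i => if i ≤ P.n then P.x i else Q.x (i - P.n)

def appt (P : TaggedPartition K u v) (Q : TaggedPartition K v w) : ℕ → K :=
  fun i => if i ≤ P.n then P.t i else Q.t (i - P.n)

lemma appx_low {P : TaggedPartition K u v} {Q : TaggedPartition K v w} {i : ℕ}
    (hi : i ≤ P.n) : appx P Q i = P.x i := if_pos hi

lemma appx_high {P : TaggedPartition K u v} {Q : TaggedPartition K v w} {i : ℕ}
    (hi : P.n ≤ i) : appx P Q i = Q.x (i - P.n) := by
  rcases eq_or_lt_of_le hi with h | h
  · rw [appx, if_pos (le_of_eq h.symm), ← h, Nat.sub_self, Q.x_zero, P.x_last]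
  · rw [appx, if_neg (by omega)]

lemma appt_high {P : TaggedPartition K u v} {Q : TaggedPartition K v w} {i : ℕ}
    (hi : P.n + 1 ≤ i) : appt P Q i = Q.t (i - P.n) := by
  rw [appt, if_neg (by omega)]

def TPappend (P : TaggedPartition K u v) (Q : TaggedPartition K v w) :
    TaggedPartition K u w where
  n := P.n + Q.n
  x := appx P Q
  t := appt P Q
  x_zero := by rw [appx_low (Nat.zero_le _), P.x_zero]
  x_last := by
    rw [appx_high (Nat.le_add_right _ _)]
    have h : P.n + Q.n - P.n = Q.n := by omega
    rw [h, Q.x_last]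
  mono := by
    intro i hi
    rcases Nat.lt_or_ge i P.n with h | h
    · rw [appx_low (by omega), appx_low (by omega)]
      exact P.mono i h
    · rw [appx_high h, appx_high (by omega)]
      have he : i + 1 - P.n = (i - P.n) + 1 := by omega
      rw [he]
      exact Q.mono (i - P.n) (by omega)
  tag_mem := by
    intro i hi
    rcases Nat.lt_or_ge (i + 1) (P.n + 1) with h | h
    · rw [appt, if_pos (by omega), appx_low (by omega), appx_low (by omega)]
      exact P.tag_mem i (by omega)
    · rw [appt_high h, appx_high (by omega), appx_high (by omega)]
      have he : i + 1 - P.n = (i - P.n) + 1 := by omega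
      rw [he]
      exact Q.tag_mem (i - P.n) (by omega)

lemma TPappend_fine {P : TaggedPartition K u v} {Q : TaggedPartition K v w}
    {δ : K → Set K} (hP : P.IsFine δ) (hQ : Q.IsFine δ) : (TPappend P Q).IsFine δ := by
  intro i hi
  have hi' : i < P.n + Q.n := hi
  show Set.Ioc (appx P Q i) (appx P Q (i + 1)) ⊆ δ (appt P Q (i + 1))
  rcases Nat.lt_or_ge i P.n with h | h
  · rw [appx_low (by omega), appx_low (by omega), appt, if_pos (by omega)]
    exact hP i h
  · rw [appx_high h, appx_high (by omega), appt_high (by omega)]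
    have he : i + 1 - P.n = (i - P.n) + 1 := by omega
    rw [he]
    exact hQ (i - P.n) (by omega)

lemma TPappend_sum (f G : K → ℝ) (P : TaggedPartition K u v) (Q : TaggedPartition K v w) :
    riemannSum f G (TPappend P Q) = riemannSum f G P + riemannSum f G Q - f v * G v := by
  have hsplit : ∑ i ∈ Finset.range (P.n + Q.n),
      f (appt P Q (i + 1)) * (G (appx P Q (i + 1)) - G (appx P Q i))
      = (∑ i ∈ Finset.range P.n, f (P.t (i + 1)) * (G (P.x (i + 1)) - G (P.x i)))
        + ∑ i ∈ Finset.range Q.n, f (Q.t (i + 1)) * (G (Q.x (i + 1)) - G (Q.x i)) := by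
    rw [Finset.range_eq_Ico, ← Finset.sum_Ico_consecutive _ (Nat.zero_le P.n) (Nat.le_add_right _ _)]
    congr 1
    · rw [← Finset.range_eq_Ico]
      refine Finset.sum_congr rfl fun i hi => ?_
      have hi' : i < P.n := Finset.mem_range.mp hi
      rw [appt, if_pos (by omega), appx_low (by omega), appx_low (by omega)]
    · rw [Finset.sum_Ico_eq_sum_range]
      have h : P.n + Q.n - P.n = Q.n := by omega
      rw [h]
      refine Finset.sum_congr rfl fun i hi => ?_
      rw [appt_high (by omega), appx_high (by omega), appx_high (by omega)]
      have h1 : P.n + i + 1 - P.n = i + 1 := by omega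
      have h2 : P.n + i - P.n = i := by omega
      rw [h1, h2]
  have hrw : riemannSum f G (TPappend P Q)
      = f u * G u + ∑ i ∈ Finset.range (P.n + Q.n),
          f (appt P Q (i + 1)) * (G (appx P Q (i + 1)) - G (appx P Q i)) := rfl
  rw [hrw, hsplit, riemannSum, riemannSum]
  ring

/-- first `k` pieces -/
def TPtake (P : TaggedPartition K u v) (k : ℕ) (hk : k ≤ P.n) :
    TaggedPartition K u (P.x k) :=
  ⟨k, P.x, P.t, P.x_zero, rfl, fun i hi => P.mono i (by omega),
    fun i hi => P.tag_mem i (by omega)⟩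

/-- pieces from `k` on -/
def TPdrop (P : TaggedPartition K u v) (k : ℕ) (hk : k ≤ P.n) :
    TaggedPartition K (P.x k) v where
  n := P.n - k
  x := fun i => P.x (i + k)
  t := fun i => P.t (i + k)
  x_zero := by show P.x (0 + k) = P.x k
               rw [Nat.zero_add]
  x_last := by
    show P.x (P.n - k + k) = v
    have h : P.n - k + k = P.n := by omega
    rw [h, P.x_last]
  mono := by
    intro i hi
    show P.x (i + k) ≤ P.x (i + 1 + k)
    have he : i + 1 + k = (i + k) + 1 := by omega
    rw [he]
    exact P.mono (i + k) (by omega)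
  tag_mem := by
    intro i hi
    show P.t (i + 1 + k) ∈ Set.Icc (P.x (i + k)) (P.x (i + 1 + k))
    have he : i + 1 + k = (i + k) + 1 := by omega
    rw [he]
    exact P.tag_mem (i + k) (by omega)

lemma TPtake_fine {P : TaggedPartition K u v} {k : ℕ} {hk : k ≤ P.n} {δ : K → Set K}
    (h : P.IsFine δ) : (TPtake P k hk).IsFine δ :=
  fun i hi => h i (by exact lt_of_lt_of_le hi hk)

lemma TPdrop_fine {P : TaggedPartition K u v} {k : ℕ} {hk : k ≤ P.n} {δ : K → Set K}
    (h : P.IsFine δ) : (TPdrop P k hk).IsFine δ := by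
  intro i hi
  have hi' : i < P.n - k := hi
  show Set.Ioc (P.x (i + k)) (P.x (i + 1 + k)) ⊆ δ (P.t (i + 1 + k))
  have he : i + 1 + k = (i + k) + 1 := by omega
  rw [he]
  exact h (i + k) (by omega)

lemma TPtake_drop_sum (f G : K → ℝ) (P : TaggedPartition K u v) (k : ℕ) (hk : k ≤ P.n) :
    riemannSum f G P
      = riemannSum f G (TPtake P k hk) + riemannSum f G (TPdrop P k hk)
        - f (P.x k) * G (P.x k) := by
  show f u * G u + ∑ i ∈ Finset.range P.n, f (P.t (i + 1)) * (G (P.x (i + 1)) - G (P.x i))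
      = (f u * G u + ∑ i ∈ Finset.range k, f (P.t (i + 1)) * (G (P.x (i + 1)) - G (P.x i)))
        + (f (P.x k) * G (P.x k) + ∑ i ∈ Finset.range (P.n - k),
            f (P.t (i + 1 + k)) * (G (P.x (i + 1 + k)) - G (P.x (i + k))))
        - f (P.x k) * G (P.x k)
  have hsplit : ∑ i ∈ Finset.range P.n, f (P.t (i + 1)) * (G (P.x (i + 1)) - G (P.x i))
      = (∑ i ∈ Finset.range k, f (P.t (i + 1)) * (G (P.x (i + 1)) - G (P.x i)))
        + ∑ i ∈ Finset.range (P.n - k),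
            f (P.t (i + 1 + k)) * (G (P.x (i + 1 + k)) - G (P.x (i + k))) := by
    rw [Finset.range_eq_Ico, ← Finset.sum_Ico_consecutive _ (Nat.zero_le k) hk,
        ← Finset.range_eq_Ico, Finset.sum_Ico_eq_sum_range]
    congr 1
    refine Finset.sum_congr rfl fun i hi => ?_
    rw [show k + i + 1 = i + 1 + k from by omega, show k + i = i + k from by omega]
  rw [hsplit]; ring

end KSa
end KSAux2
section KSAux3
set_option linter.unusedSectionVars false
variable {K : Type*} [LinearOrder K] [TopologicalSpace K] [OrderTopology K]
  [CompactSpace K]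
namespace KSa
variable {u v w : K}

def tsx (P : TaggedPartition K u v) : ℕ → K :=
  fun j => if j % 2 = 0 then P.x (j / 2) else P.t ((j + 1) / 2)

def tst (P : TaggedPartition K u v) : ℕ → K :=
  fun j => P.t ((j + 1) / 2)

lemma tsx_even (P : TaggedPartition K u v) (i : ℕ) : tsx P (2 * i) = P.x i := by
  rw [tsx, if_pos (by omega)]
  congr 1; omega

lemma tsx_odd (P : TaggedPartition K u v) (i : ℕ) : tsx P (2 * i + 1) = P.t (i + 1) := by
  rw [tsx, if_neg (by omega)]
  congr 1; omega

lemma tst_odd (P : TaggedPartition K u v) (i : ℕ) : tst P (2 * i + 1) = P.t (i + 1) := by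
  rw [tst]; congr 1; omega

lemma tst_even (P : TaggedPartition K u v) (i : ℕ) : tst P (2 * i + 2) = P.t (i + 1) := by
  rw [tst]; congr 1; omega

/-- split every piece at its tag -/
def TPsplitTags (P : TaggedPartition K u v) : TaggedPartition K u v where
  n := 2 * P.n
  x := tsx P
  t := tst P
  x_zero := by
    have := tsx_even P 0
    rw [show (2 * 0 : ℕ) = 0 from rfl] at this
    rw [this, P.x_zero]
  x_last := by rw [tsx_even P P.n, P.x_last]
  mono := by
    intro j hj
    rcases Nat.even_or_odd j with ⟨i, hi⟩ | ⟨i, hi⟩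
    · have hj' : j = 2 * i := by omega
      subst hj'
      rw [tsx_even, show 2 * i + 1 = 2 * i + 1 from rfl, tsx_odd]
      exact (P.tag_mem i (by omega)).1
    · have hj' : j = 2 * i + 1 := by omega
      subst hj'
      rw [tsx_odd, show 2 * i + 1 + 1 = 2 * (i + 1) from by omega, tsx_even]
      exact (P.tag_mem i (by omega)).2
  tag_mem := by
    intro j hj
    rcases Nat.even_or_odd j with ⟨i, hi⟩ | ⟨i, hi⟩
    · have hj' : j = 2 * i := by omega
      subst hj'
      rw [show 2 * i + 1 = 2 * i + 1 from rfl, tst_odd, tsx_even, tsx_odd]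
      exact ⟨(P.tag_mem i (by omega)).1, le_rfl⟩
    · have hj' : j = 2 * i + 1 := by omega
      subst hj'
      rw [show 2 * i + 1 + 1 = 2 * i + 2 from rfl, tst_even, tsx_odd,
          show 2 * i + 2 = 2 * (i + 1) from by omega, tsx_even]
      exact ⟨le_rfl, (P.tag_mem i (by omega)).2⟩

lemma TPsplitTags_n (P : TaggedPartition K u v) : (TPsplitTags P).n = 2 * P.n := rfl

lemma TPsplitTags_fine {P : TaggedPartition K u v} {δ : K → Set K} (h : P.IsFine δ) :
    (TPsplitTags P).IsFine δ := by
  intro j hj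
  have hj' : j < 2 * P.n := hj
  show Set.Ioc (tsx P j) (tsx P (j + 1)) ⊆ δ (tst P (j + 1))
  rcases Nat.even_or_odd j with ⟨i, hi⟩ | ⟨i, hi⟩
  · have hj2 : j = 2 * i := by omega
    subst hj2
    rw [tsx_even, tsx_odd, tst_odd]
    exact (Set.Ioc_subset_Ioc_right (P.tag_mem i (by omega)).2).trans (h i (by omega))
  · have hj2 : j = 2 * i + 1 := by omega
    subst hj2
    rw [tsx_odd, show 2 * i + 1 + 1 = 2 * i + 2 from rfl, tst_even,
        show 2 * i + 2 = 2 * (i + 1) from by omega, tsx_even]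
    exact (Set.Ioc_subset_Ioc_left (P.tag_mem i (by omega)).1).trans (h i (by omega))

lemma TPsplitTags_sum (f G : K → ℝ) (P : TaggedPartition K u v) :
    riemannSum f G (TPsplitTags P) = riemannSum f G P := by
  have hrw : riemannSum f G (TPsplitTags P)
      = f u * G u + ∑ j ∈ Finset.range (2 * P.n),
          f (tst P (j + 1)) * (G (tsx P (j + 1)) - G (tsx P j)) := rfl
  rw [hrw, riemannSum, sum_range_two_mul]
  congr 1
  refine Finset.sum_congr rfl fun i _ => ?_
  rw [show 2 * i + 1 + 1 = 2 * i + 2 from rfl, tst_odd, tst_even, tsx_odd, tsx_even,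
      show 2 * i + 2 = 2 * (i + 1) from by omega, tsx_even]
  ring

/-- glue a chain of partitions -/
def TPglue (x : ℕ → K) : ∀ k : ℕ, (∀ i, i < k → TaggedPartition K (x i) (x (i + 1))) →
    TaggedPartition K (x 0) (x k)
  | 0, _ => TPtriv (x 0)
  | (k + 1), Q => TPappend (TPglue x k (fun i hi => Q i (by omega))) (Q k (by omega))

lemma TPglue_fine (x : ℕ → K) (k : ℕ) (Q : ∀ i, i < k → TaggedPartition K (x i) (x (i + 1)))
    {δ : K → Set K} (hQ : ∀ i (hi : i < k), (Q i hi).IsFine δ) : (TPglue x k Q).IsFine δ := by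
  induction k with
  | zero => exact TPtriv_fine _ _
  | succ k ih =>
    exact TPappend_fine (ih _ (fun i hi => hQ i (by omega))) (hQ k (by omega))

lemma TPglue_sum (f G : K → ℝ) (x : ℕ → K) (k : ℕ)
    (Q : ∀ i, i < k → TaggedPartition K (x i) (x (i + 1))) (r : ℕ → ℝ)
    (hr : ∀ i (hi : i < k), riemannSum f G (Q i hi) = r i) :
    riemannSum f G (TPglue x k Q)
      = f (x 0) * G (x 0) + ∑ i ∈ Finset.range k, (r i - f (x i) * G (x i)) := by
  induction k with
  | zero => simp [TPglue, TPtriv_sum]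
  | succ k ih =>
    have : riemannSum f G (TPglue x (k + 1) Q)
        = riemannSum f G (TPglue x k (fun i hi => Q i (by omega)))
          + riemannSum f G (Q k (by omega)) - f (x k) * G (x k) := by
      rw [show TPglue x (k + 1) Q
            = TPappend (TPglue x k (fun i hi => Q i (by omega))) (Q k (by omega)) from rfl]
      exact TPappend_sum f G _ _
    rw [this, ih _ (fun i hi => hr i (by omega)), hr k (by omega), Finset.sum_range_succ]
    ring

end KSa
end KSAux3
section KSAux4
set_option linter.unusedSectionVars false
variable {K : Type*} [LinearOrder K] [TopologicalSpace K] [OrderTopology K]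
  [CompactSpace K]
namespace KSa
variable {u v w : K}

lemma gauge_inter {a b : K} {δ1 δ2 : K → Set K} (h1 : IsGauge K a b δ1)
    (h2 : IsGauge K a b δ2) : IsGauge K a b (fun x => δ1 x ∩ δ2 x) := by
  intro x hx
  obtain ⟨m1, o1, U1, hU1, he1⟩ := h1 x hx
  obtain ⟨m2, o2, U2, hU2, he2⟩ := h2 x hx
  refine ⟨⟨m1, m2⟩, o1.inter o2, U1 ∩ U2, hU1.inter hU2, ?_⟩
  show δ1 x ∩ δ2 x = U1 ∩ U2 ∩ Set.Icc a b
  rw [he1, he2]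
  ext z
  simp only [Set.mem_inter_iff, Set.mem_Icc]
  tauto

lemma gauge_restrict {a b : K} {δ : K → Set K} (h : IsGauge K a b δ)
    (hsub : Set.Icc u v ⊆ Set.Icc a b) :
    IsGauge K u v (fun x => δ x ∩ Set.Icc u v) := by
  intro x hx
  obtain ⟨m1, o1, U, hU, he⟩ := h x (hsub hx)
  refine ⟨⟨m1, hx⟩, o1.inter Set.ordConnected_Icc, U, hU, ?_⟩
  show δ x ∩ Set.Icc u v = U ∩ Set.Icc u v
  rw [he]
  ext z
  simp only [Set.mem_inter_iff, Set.mem_Icc]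
  constructor
  · rintro ⟨⟨h1, _⟩, h3⟩; exact ⟨h1, h3.1, h3.2⟩
  · rintro ⟨h1, h2, h3⟩
    have := hsub ⟨h2, h3⟩
    exact ⟨⟨h1, this.1, this.2⟩, h2, h3⟩

/-- Cousin's lemma: fine partitions exist. -/
lemma cousin (huv : u ≤ v) {δ : K → Set K} (hδ : IsGauge K u v δ) :
    ∃ P : TaggedPartition K u v, P.IsFine δ := by
  classical
  set S : Set K := {c | c ∈ Set.Icc u v ∧ ∃ P : TaggedPartition K u c, P.IsFine δ} with hS
  have hu : u ∈ S := ⟨⟨le_rfl, huv⟩, TPtriv u, TPtriv_fine _ _⟩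
  have hScl : IsCompact (closure S) := isClosed_closure.isCompact
  obtain ⟨m, hm⟩ := hScl.exists_isGreatest ⟨u, subset_closure hu⟩
  have hSsub : S ⊆ Set.Icc u v := fun c hc => hc.1
  have hmIcc : m ∈ Set.Icc u v := (isClosed_Icc.closure_subset_iff.mpr hSsub) hm.1
  obtain ⟨hmδ, hmOrd, U, hUopen, hUeq⟩ := hδ m hmIcc
  have hmU : m ∈ U := by rw [hUeq] at hmδ; exact hmδ.1
  obtain ⟨c, hcU, hcS⟩ := mem_closure_iff.mp hm.1 U hUopen hmU
  have hcδ : c ∈ δ m := by rw [hUeq]; exact ⟨hcU, hSsub hcS⟩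
  have hcm : c ≤ m := hm.2 (subset_closure hcS)
  obtain ⟨Pc, hPc⟩ := hcS.2
  have hmS : m ∈ S := by
    refine ⟨hmIcc, TPappend Pc (TPsingle c m m hcm ⟨hcm, le_rfl⟩), TPappend_fine hPc ?_⟩
    apply TPsingle_fine
    intro z hz
    exact hmOrd.out hcδ hmδ ⟨le_of_lt hz.1, hz.2⟩
  rcases eq_or_lt_of_le hmIcc.2 with hmv | hmv
  · obtain ⟨_, P, hP⟩ := hmS
    exact ⟨TPcast P rfl hmv, TPcast_fine hP⟩
  · exfalso
    obtain ⟨u', hmu', hIco⟩ := exists_Ico_subset_of_mem_nhds (hUopen.mem_nhds hmU) ⟨v, hmv⟩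
    set d := min u' v with hd
    have hmd : m < d := lt_min hmu' hmv
    obtain ⟨_, Pm, hPm⟩ := hmS
    have hcontra : ∃ e, e ∈ S ∧ m < e := by
      rcases Set.eq_empty_or_nonempty (Set.Ioo m d) with hemp | ⟨e, he⟩
      · refine ⟨d, ⟨⟨le_trans hmIcc.1 (le_of_lt hmd), min_le_right _ _⟩,
          TPappend Pm (TPsingle m d d (le_of_lt hmd) ⟨le_of_lt hmd, le_rfl⟩),
          TPappend_fine hPm (TPsingle_fine _ _ ?_)⟩, hmd⟩
        intro z hz
        have hzd : z = d := by
          rcases lt_or_eq_of_le hz.2 with h | h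
          · exact absurd (Set.mem_Ioo.mpr ⟨hz.1, h⟩) (by rw [hemp]; exact Set.notMem_empty z)
          · exact h
        subst hzd
        exact (hδ d ⟨le_trans hmIcc.1 (le_of_lt hmd), min_le_right _ _⟩).1
      · refine ⟨e, ⟨⟨le_trans hmIcc.1 (le_of_lt he.1), le_trans (le_of_lt he.2) (min_le_right _ _)⟩,
          TPappend Pm (TPsingle m e m (le_of_lt he.1) ⟨le_rfl, le_of_lt he.1⟩),
          TPappend_fine hPm (TPsingle_fine _ _ ?_)⟩, he.1⟩
        intro z hz
        rw [hUeq]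
        constructor
        · exact hIco ⟨le_of_lt hz.1, lt_of_le_of_lt hz.2 (lt_of_lt_of_le he.2 (min_le_left _ _))⟩
        · exact ⟨le_trans hmIcc.1 (le_of_lt hz.1),
            le_trans hz.2 (le_trans (le_of_lt he.2) (min_le_right _ _))⟩
    obtain ⟨e, heS, hme⟩ := hcontra
    exact absurd (hm.2 (subset_closure heS)) (not_le.mpr hme)

end KSa
end KSAux4
section KSAux5
set_option linter.unusedSectionVars false
variable {K : Type*} [LinearOrder K] [TopologicalSpace K] [OrderTopology K]
  [CompactSpace K] [BoundedOrder K]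
namespace KSa
variable {u v w : K} {f g G : K → ℝ}

lemma integral_unique {A A' : ℝ} (huv : u ≤ v) (h1 : HasIntegral f G u v A)
    (h2 : HasIntegral f G u v A') : A = A' := by
  by_contra hne
  have habs : 0 < |A - A'| := abs_pos.mpr (sub_ne_zero.mpr hne)
  obtain ⟨δ1, hg1, hd1⟩ := h1 (|A - A'| / 2) (by linarith)
  obtain ⟨δ2, hg2, hd2⟩ := h2 (|A - A'| / 2) (by linarith)
  obtain ⟨P, hP⟩ := cousin huv (gauge_inter hg1 hg2)
  have e1 := hd1 P (fine_mono (fun x => Set.inter_subset_left) hP)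
  have e2 := hd2 P (fine_mono (fun x => Set.inter_subset_right) hP)
  obtain ⟨l1, l2⟩ := abs_lt.mp e1
  obtain ⟨l3, l4⟩ := abs_lt.mp e2
  rcases le_or_gt 0 (A - A') with h | h
  · have : |A - A'| = A - A' := abs_of_nonneg h
    linarith
  · have : |A - A'| = -(A - A') := abs_of_neg h
    linarith

lemma hasIntegral_degen (f G : K → ℝ) (c : K) : HasIntegral f G c c (f c * G c) := by
  intro ε hε
  refine ⟨fun _ => Set.Icc c c, ?_, ?_⟩
  · intro x hx
    have hx' : x = c := le_antisymm hx.2 hx.1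
    subst hx'
    exact ⟨⟨le_rfl, le_rfl⟩, Set.ordConnected_Icc, Set.univ, isOpen_univ, by simp⟩
  · intro P _
    have hx : ∀ i ≤ P.n, P.x i = c := by
      intro i hi
      have h1 : P.x 0 ≤ P.x i := chain_mono P.mono (Nat.zero_le i) hi
      have h2 : P.x i ≤ P.x P.n := chain_mono P.mono hi le_rfl
      rw [P.x_zero] at h1
      rw [P.x_last] at h2
      exact le_antisymm h2 h1
    have : riemannSum f G P = f c * G c := by
      rw [riemannSum]
      have hz : ∑ i ∈ Finset.range P.n, f (P.t (i + 1)) * (G (P.x (i + 1)) - G (P.x i)) = 0 := by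
        refine Finset.sum_eq_zero fun i hi => ?_
        have hi' := Finset.mem_range.mp hi
        rw [hx (i + 1) (by omega), hx i (by omega), sub_self, mul_zero]
      rw [hz]
      simp
    rw [this]
    simpa using hε

open Classical in
/-- the value of the integral (junk if not integrable) -/
noncomputable def integ (f G : K → ℝ) (u v : K) : ℝ :=
  if h : ∃ A, HasIntegral f G u v A then h.choose else 0

lemma integ_eq {A : ℝ} (huv : u ≤ v) (h : HasIntegral f G u v A) : integ f G u v = A := by
  have hex : ∃ A, HasIntegral f G u v A := ⟨A, h⟩
  rw [integ, dif_pos hex]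
  exact integral_unique huv hex.choose_spec h

lemma integ_degen (f G : K → ℝ) (c : K) : integ f G c c = f c * G c :=
  integ_eq le_rfl (hasIntegral_degen f G c)

lemma cauchy_property (hf : ∃ A, HasIntegral f G (⊥ : K) ⊤ A) (huv : u ≤ v)
    {ε : ℝ} (hε : 0 < ε) :
    ∃ δ, IsGauge K u v δ ∧ ∀ P Q : TaggedPartition K u v, P.IsFine δ → Q.IsFine δ →
      |riemannSum f G P - riemannSum f G Q| < ε := by
  obtain ⟨A, hA⟩ := hf
  obtain ⟨δ0, hδ0g, hδ0⟩ := hA (ε / 2) (by linarith)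
  have hsub : ∀ a b : K, Set.Icc a b ⊆ Set.Icc (⊥ : K) ⊤ := fun a b z _ => ⟨bot_le, le_top⟩
  refine ⟨fun x => δ0 x ∩ Set.Icc u v, gauge_restrict hδ0g (hsub u v), ?_⟩
  intro P Q hP hQ
  obtain ⟨L, hL⟩ := cousin (bot_le : (⊥ : K) ≤ u) (gauge_restrict hδ0g (hsub ⊥ u))
  obtain ⟨R, hR⟩ := cousin (le_top : v ≤ (⊤ : K)) (gauge_restrict hδ0g (hsub v ⊤))
  have hLf : L.IsFine δ0 := fine_mono (fun x => Set.inter_subset_left) hL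
  have hRf : R.IsFine δ0 := fine_mono (fun x => Set.inter_subset_left) hR
  have hPf : P.IsFine δ0 := fine_mono (fun x => Set.inter_subset_left) hP
  have hQf : Q.IsFine δ0 := fine_mono (fun x => Set.inter_subset_left) hQ
  have h1 := hδ0 (TPappend (TPappend L P) R) (TPappend_fine (TPappend_fine hLf hPf) hRf)
  have h2 := hδ0 (TPappend (TPappend L Q) R) (TPappend_fine (TPappend_fine hLf hQf) hRf)
  rw [TPappend_sum, TPappend_sum] at h1 h2
  obtain ⟨l1, l2⟩ := abs_lt.mp h1
  obtain ⟨l3, l4⟩ := abs_lt.mp h2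
  apply abs_lt.mpr
  constructor <;> linarith

lemma sub_integrable (hf : ∃ A, HasIntegral f G (⊥ : K) ⊤ A) (huv : u ≤ v) :
    ∃ B, HasIntegral f G u v B := by
  classical
  have hC : ∀ n : ℕ, ∃ δ, IsGauge K u v δ ∧ ∀ P Q : TaggedPartition K u v,
      P.IsFine δ → Q.IsFine δ →
      |riemannSum f G P - riemannSum f G Q| < 1 / (n + 1) :=
    fun n => cauchy_property hf huv (by positivity)
  choose δ hδg hδC using hC
  let Δ : ℕ → K → Set K := fun n => Nat.rec (δ 0) (fun k ih => fun x => ih x ∩ δ (k + 1) x) n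
  have hΔg : ∀ n, IsGauge K u v (Δ n) := by
    intro n
    induction n with
    | zero => exact hδg 0
    | succ n ih => exact gauge_inter ih (hδg (n + 1))
  have hΔsub : ∀ k n, k ≤ n → ∀ x, Δ n x ⊆ δ k x := by
    intro k n hkn
    induction n with
    | zero =>
      have : k = 0 := by omega
      subst this
      exact fun x => subset_rfl
    | succ n ih =>
      rcases Nat.lt_or_ge k (n + 1) with h | h
      · exact fun x => Set.inter_subset_left.trans (ih (by omega) x)
      · have : k = n + 1 := by omega
        subst this
        exact fun x => Set.inter_subset_right
  have hP : ∀ n : ℕ, ∃ P : TaggedPartition K u v, P.IsFine (Δ n) :=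
    fun n => cousin huv (hΔg n)
  choose P hPf using hP
  set a : ℕ → ℝ := fun n => riemannSum f G (P n) with ha
  have key : ∀ N n m : ℕ, N ≤ n → N ≤ m → |a n - a m| < 1 / (N + 1) := by
    intro N n m hn hm
    exact hδC N _ _ (fine_mono (hΔsub N n hn) (hPf n)) (fine_mono (hΔsub N m hm) (hPf m))
  have hcs : CauchySeq a := by
    apply cauchySeq_of_le_tendsto_0 (b := fun n : ℕ => 1 / ((n : ℝ) + 1))
    · intro n m N hn hm
      rw [Real.dist_eq]
      exact le_of_lt (key N n m hn hm)
    · exact tendsto_one_div_add_atTop_nhds_zero_nat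
  obtain ⟨B, hB⟩ := cauchySeq_tendsto_of_complete hcs
  refine ⟨B, ?_⟩
  intro ε hε
  obtain ⟨N, hN⟩ := exists_nat_gt (2 / ε)
  have hN1 : (0 : ℝ) < N + 1 := by positivity
  have hNε : 2 / ((N : ℝ) + 1) < ε := by
    rw [div_lt_iff₀ hN1]
    have h2 : 2 < ((N : ℝ) + 1) * ε := by
      have := (div_lt_iff₀ hε).mp (hN.trans (lt_add_one (N : ℝ)))
      linarith
    linarith
  refine ⟨Δ N, hΔg N, ?_⟩
  intro Q hQ
  have h1 : |riemannSum f G Q - a N| < 1 / (N + 1) :=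
    hδC N Q (P N) (fine_mono (hΔsub N N le_rfl) hQ) (fine_mono (hΔsub N N le_rfl) (hPf N))
  have h2 : |a N - B| ≤ 1 / (N + 1) := by
    have htend : Filter.Tendsto (fun m => |a N - a m|) Filter.atTop (nhds |a N - B|) :=
      (Filter.Tendsto.sub tendsto_const_nhds hB).abs
    apply le_of_tendsto htend
    filter_upwards [Filter.eventually_ge_atTop N] with m hm
    exact le_of_lt (key N N m le_rfl hm)
  calc |riemannSum f G Q - B| ≤ |riemannSum f G Q - a N| + |a N - B| := abs_sub_le _ _ _
    _ < 1 / (N + 1) + 1 / (N + 1) := by linarith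
    _ = 2 / ((N : ℝ) + 1) := by ring
    _ < ε := hNε

end KSa
end KSAux5
section KSAux6
set_option linter.unusedSectionVars false
variable {K : Type*} [LinearOrder K] [TopologicalSpace K] [OrderTopology K]
  [CompactSpace K] [BoundedOrder K]
namespace KSa
variable {u v w : K} {f g G : K → ℝ}

lemma integ_add (hf : ∃ A, HasIntegral f G (⊥ : K) ⊤ A) (h1 : u ≤ v) (h2 : v ≤ w) :
    integ f G u w = integ f G u v + integ f G v w - f v * G v := by
  rcases eq_or_lt_of_le h1 with rfl | h1'
  · rw [integ_degen]; ring
  rcases eq_or_lt_of_le h2 with rfl | h2'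
  · rw [integ_degen]; ring
  obtain ⟨Auv, hAuv⟩ := sub_integrable hf h1
  obtain ⟨Avw, hAvw⟩ := sub_integrable hf h2
  have main : HasIntegral f G u w (Auv + Avw - f v * G v) := by
    intro ε hε
    obtain ⟨δ1, hg1, hd1⟩ := hAuv (ε / 2) (by linarith)
    obtain ⟨δ2, hg2, hd2⟩ := hAvw (ε / 2) (by linarith)
    obtain ⟨hv1mem, hv1ord, U1, hU1open, hU1eq⟩ := hg1 v ⟨h1, le_rfl⟩
    obtain ⟨hv2mem, hv2ord, U2, hU2open, hU2eq⟩ := hg2 v ⟨le_rfl, h2⟩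
    have hδ1sub : δ1 v ⊆ Set.Icc u v := by rw [hU1eq]; exact Set.inter_subset_right
    have hδ2sub : δ2 v ⊆ Set.Icc v w := by rw [hU2eq]; exact Set.inter_subset_right
    have hvU1 : v ∈ U1 := by rw [hU1eq] at hv1mem; exact hv1mem.1
    have hvU2 : v ∈ U2 := by rw [hU2eq] at hv2mem; exact hv2mem.1
    refine ⟨fun x => if x < v then δ1 x ∩ Set.Iio v else if v < x then δ2 x ∩ Set.Ioi v
        else δ1 v ∪ δ2 v, ?_, ?_⟩
    · intro x hx
      show x ∈ (if x < v then δ1 x ∩ Set.Iio v else if v < x then δ2 x ∩ Set.Ioi v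
            else δ1 v ∪ δ2 v)
          ∧ (if x < v then δ1 x ∩ Set.Iio v else if v < x then δ2 x ∩ Set.Ioi v
            else δ1 v ∪ δ2 v).OrdConnected
          ∧ ∃ U, IsOpen U ∧ (if x < v then δ1 x ∩ Set.Iio v
            else if v < x then δ2 x ∩ Set.Ioi v else δ1 v ∪ δ2 v) = U ∩ Set.Icc u w
      split_ifs with hxv hvx
      · obtain ⟨hm, ho, U, hUo, hUe⟩ := hg1 x ⟨hx.1, le_of_lt hxv⟩
        refine ⟨⟨hm, hxv⟩, ho.inter Set.ordConnected_Iio, U ∩ Set.Iio v,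
          hUo.inter isOpen_Iio, ?_⟩
        rw [hUe]
        ext z
        simp only [Set.mem_inter_iff, Set.mem_Icc, Set.mem_Iio]
        constructor
        · rintro ⟨⟨hz1, hz2, hz3⟩, hz4⟩
          exact ⟨⟨hz1, hz4⟩, hz2, le_trans hz3 h2⟩
        · rintro ⟨⟨hz1, hz4⟩, hz2, hz3⟩
          exact ⟨⟨hz1, hz2, le_of_lt hz4⟩, hz4⟩
      · obtain ⟨hm, ho, U, hUo, hUe⟩ := hg2 x ⟨le_of_lt hvx, hx.2⟩
        refine ⟨⟨hm, hvx⟩, ho.inter Set.ordConnected_Ioi, U ∩ Set.Ioi v,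
          hUo.inter isOpen_Ioi, ?_⟩
        rw [hUe]
        ext z
        simp only [Set.mem_inter_iff, Set.mem_Icc, Set.mem_Ioi]
        constructor
        · rintro ⟨⟨hz1, hz2, hz3⟩, hz4⟩
          exact ⟨⟨hz1, hz4⟩, le_trans h1 hz2, hz3⟩
        · rintro ⟨⟨hz1, hz4⟩, hz2, hz3⟩
          exact ⟨⟨hz1, le_of_lt hz4, hz3⟩, hz4⟩
      · have hxe : x = v := le_antisymm (not_lt.mp hvx) (not_lt.mp hxv)
        subst hxe
        refine ⟨Set.mem_union_left _ hv1mem, ⟨?_⟩,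
          (U1 ∩ Set.Iio x ∪ U2 ∩ Set.Ioi x) ∪ U1 ∩ U2,
          ((hU1open.inter isOpen_Iio).union (hU2open.inter isOpen_Ioi)).union
            (hU1open.inter hU2open), ?_⟩
        · intro p hp q hq z hz
          rcases (Set.mem_union _ _ _).mp hp with hp' | hp' <;>
            rcases (Set.mem_union _ _ _).mp hq with hq' | hq'
          · exact Set.mem_union_left _ (hv1ord.out hp' hq' hz)
          · rcases le_or_gt z x with hzv | hzv
            · exact Set.mem_union_left _ (hv1ord.out hp' hv1mem ⟨hz.1, hzv⟩)
            · exact Set.mem_union_right _ (hv2ord.out hv2mem hq' ⟨le_of_lt hzv, hz.2⟩)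
          · have hpv : x ≤ p := (hδ2sub hp').1
            have hqv : q ≤ x := (hδ1sub hq').2
            have hzv : z = x := le_antisymm (le_trans hz.2 hqv) (le_trans hpv hz.1)
            rw [hzv]
            exact Set.mem_union_left _ hv1mem
          · exact Set.mem_union_right _ (hv2ord.out hp' hq' hz)
        · ext z
          constructor
          · intro hz
            rcases (Set.mem_union _ _ _).mp hz with hz' | hz'
            · rw [hU1eq] at hz'
              rcases lt_or_eq_of_le hz'.2.2 with hzv | hzv
              · exact ⟨Set.mem_union_left _ (Set.mem_union_left _ ⟨hz'.1, hzv⟩),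
                  hz'.2.1, le_trans (le_of_lt hzv) h2⟩
              · refine ⟨Set.mem_union_right _ ⟨hz'.1, ?_⟩, hz'.2.1, le_trans hz'.2.2 h2⟩
                rw [hzv]; exact hvU2
            · rw [hU2eq] at hz'
              rcases lt_or_eq_of_le hz'.2.1 with hzv | hzv
              · exact ⟨Set.mem_union_left _ (Set.mem_union_right _ ⟨hz'.1, hzv⟩),
                  le_trans h1 hz'.2.1, hz'.2.2⟩
              · refine ⟨Set.mem_union_right _ ⟨?_, hz'.1⟩, le_trans h1 hz'.2.1, hz'.2.2⟩
                rw [← hzv]; exact hvU1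
          · rintro ⟨hzU, hzu, hzw⟩
            rcases (Set.mem_union _ _ _).mp hzU with hzU' | hzU'
            · rcases (Set.mem_union _ _ _).mp hzU' with ⟨hz1, hz2⟩ | ⟨hz1, hz2⟩
              · refine Set.mem_union_left _ ?_
                rw [hU1eq]
                exact ⟨hz1, hzu, le_of_lt hz2⟩
              · refine Set.mem_union_right _ ?_
                rw [hU2eq]
                exact ⟨hz1, le_of_lt hz2, hzw⟩
            · obtain ⟨hz1, hz2⟩ := hzU'
              rcases le_or_gt z x with hzv | hzv
              · refine Set.mem_union_left _ ?_
                rw [hU1eq]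
                exact ⟨hz1, hzu, hzv⟩
              · refine Set.mem_union_right _ ?_
                rw [hU2eq]
                exact ⟨hz2, le_of_lt hzv, hzw⟩
    · intro P hP
      have hvmem : v ∈ Set.Icc u w := ⟨h1, h2⟩
      rcases P.cover hvmem with hveq | ⟨i, hi, hvIoc⟩
      · exact absurd hveq (ne_of_gt h1')
      have hmem : v ∈ (if P.t (i + 1) < v then δ1 (P.t (i + 1)) ∩ Set.Iio v
          else if v < P.t (i + 1) then δ2 (P.t (i + 1)) ∩ Set.Ioi v
          else δ1 v ∪ δ2 v) := hP i hi hvIoc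
      have htv : P.t (i + 1) = v := by
        split_ifs at hmem with hc1 hc2
        · exact absurd hmem.2 (lt_irrefl v)
        · exact absurd hmem.2 (lt_irrefl v)
        · exact le_antisymm (not_lt.mp hc2) (not_lt.mp hc1)
      set Q := TPsplitTags P with hQ
      have hQf := TPsplitTags_fine hP
      have hk : 2 * i + 1 ≤ Q.n := by
        have : Q.n = 2 * P.n := rfl
        omega
      have hQxk : Q.x (2 * i + 1) = v := by
        show tsx P (2 * i + 1) = v
        rw [tsx_odd, htv]
      have htop : (TPtake Q (2 * i + 1) hk).IsFine δ1 := by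
        intro j hj
        have hj' : j < 2 * i + 1 := hj
        have hjQ : j < Q.n := by omega
        show Set.Ioc (Q.x j) (Q.x (j + 1)) ⊆ δ1 (Q.t (j + 1))
        have hτ : Q.t (j + 1) ≤ v := by
          have ht1 : Q.t (j + 1) ≤ Q.x (j + 1) := (Q.tag_mem j hjQ).2
          have ht2 : Q.x (j + 1) ≤ Q.x (2 * i + 1) := chain_mono Q.mono (by omega) hk
          rw [hQxk] at ht2
          exact le_trans ht1 ht2
        intro z hz
        have hzle : z ≤ v := by
          have ht2 : Q.x (j + 1) ≤ Q.x (2 * i + 1) := chain_mono Q.mono (by omega) hk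
          rw [hQxk] at ht2
          exact le_trans hz.2 ht2
        have hzδ' : z ∈ (if Q.t (j + 1) < v then δ1 (Q.t (j + 1)) ∩ Set.Iio v
            else if v < Q.t (j + 1) then δ2 (Q.t (j + 1)) ∩ Set.Ioi v
            else δ1 v ∪ δ2 v) := hQf j hjQ hz
        split_ifs at hzδ' with hc1 hc2
        · exact hzδ'.1
        · exact absurd hc2 (not_lt.mpr hτ)
        · have hτv : Q.t (j + 1) = v := le_antisymm hτ (not_lt.mp hc1)
          rw [hτv]
          rcases (Set.mem_union _ _ _).mp hzδ' with hzin | hzin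
          · exact hzin
          · have hzv : z = v := le_antisymm hzle (hδ2sub hzin).1
            rw [hzv]; exact hv1mem
      have hbot : (TPdrop Q (2 * i + 1) hk).IsFine δ2 := by
        intro j hj
        have hj' : j < Q.n - (2 * i + 1) := hj
        have hjQ : j + (2 * i + 1) < Q.n := by omega
        show Set.Ioc (Q.x (j + (2 * i + 1))) (Q.x (j + 1 + (2 * i + 1)))
            ⊆ δ2 (Q.t (j + 1 + (2 * i + 1)))
        rw [show j + 1 + (2 * i + 1) = (j + (2 * i + 1)) + 1 from by omega]
        have hvle : v ≤ Q.x (j + (2 * i + 1)) := by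
          rw [← hQxk]
          exact chain_mono Q.mono (by omega) (by omega)
        have hτ : v ≤ Q.t ((j + (2 * i + 1)) + 1) :=
          le_trans hvle (Q.tag_mem (j + (2 * i + 1)) hjQ).1
        intro z hz
        have hzgt : v < z := lt_of_le_of_lt hvle hz.1
        have hzδ' : z ∈ (if Q.t ((j + (2 * i + 1)) + 1) < v
            then δ1 (Q.t ((j + (2 * i + 1)) + 1)) ∩ Set.Iio v
            else if v < Q.t ((j + (2 * i + 1)) + 1)
            then δ2 (Q.t ((j + (2 * i + 1)) + 1)) ∩ Set.Ioi v
            else δ1 v ∪ δ2 v) := hQf (j + (2 * i + 1)) hjQ hz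
        split_ifs at hzδ' with hc1 hc2
        · exact absurd hc1 (not_lt.mpr hτ)
        · exact hzδ'.1
        · have hτv : Q.t ((j + (2 * i + 1)) + 1) = v := le_antisymm (not_lt.mp hc2) hτ
          rw [hτv]
          rcases (Set.mem_union _ _ _).mp hzδ' with hzin | hzin
          · have : z ≤ v := (hδ1sub hzin).2
            exact absurd this (not_le.mpr hzgt)
          · exact hzin
      set S1 := riemannSum f G (TPtake Q (2 * i + 1) hk) with hS1
      set S2 := riemannSum f G (TPdrop Q (2 * i + 1) hk) with hS2
      have h0 := TPtake_drop_sum f G Q (2 * i + 1) hk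
      rw [← hS1, ← hS2, hQxk] at h0
      have e1 := hd1 (TPcast (TPtake Q (2 * i + 1) hk) rfl hQxk) (TPcast_fine htop)
      have e2 := hd2 (TPcast (TPdrop Q (2 * i + 1) hk) hQxk rfl) (TPcast_fine hbot)
      rw [TPcast_sum, ← hS1] at e1
      rw [TPcast_sum, ← hS2] at e2
      have hPQ : riemannSum f G P = riemannSum f G Q := (TPsplitTags_sum f G P).symm
      rw [hPQ, h0]
      obtain ⟨l1, l2⟩ := abs_lt.mp e1
      obtain ⟨l3, l4⟩ := abs_lt.mp e2
      apply abs_lt.mpr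
      constructor <;> linarith
  rw [integ_eq (le_trans h1 h2) main, integ_eq h1 hAuv, integ_eq h2 hAvw]

lemma integ_chain (hf : ∃ A, HasIntegral f G (⊥ : K) ⊤ A) {n : ℕ} {x : ℕ → K}
    (hm : ∀ i < n, x i ≤ x (i + 1)) :
    ∀ k ≤ n, integ f G (x 0) (x k)
      = f (x 0) * G (x 0)
        + ∑ i ∈ Finset.range k, (integ f G (x i) (x (i + 1)) - f (x i) * G (x i)) := by
  intro k
  induction k with
  | zero => intro _; rw [integ_degen]; simp
  | succ k ih =>
    intro hk
    have hadd := integ_add hf (chain_mono hm (Nat.zero_le k) (by omega)) (hm k (by omega))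
    rw [hadd, ih (by omega), Finset.sum_range_succ]
    ring

lemma abs_phi_chain (hf : ∃ A, HasIntegral f G (⊥ : K) ⊤ A) {n : ℕ} {x : ℕ → K}
    (hm : ∀ i < n, x i ≤ x (i + 1)) :
    ∀ q p : ℕ, p ≤ q → q ≤ n →
      |integ f G (x p) (x q) - f (x p) * G (x p)|
        ≤ ∑ i ∈ Finset.Ico p q, |integ f G (x i) (x (i + 1)) - f (x i) * G (x i)| := by
  intro q
  induction q with
  | zero =>
    intro p hp _
    have : p = 0 := by omega
    subst this
    rw [integ_degen]
    simp
  | succ q ih =>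
    intro p hp hq
    rcases Nat.lt_or_ge p (q + 1) with h | h
    · have hpq : p ≤ q := by omega
      have hadd := integ_add hf (chain_mono hm hpq (by omega)) (hm q (by omega))
      rw [Finset.sum_Ico_succ_top hpq]
      have key : integ f G (x p) (x (q + 1)) - f (x p) * G (x p)
          = (integ f G (x p) (x q) - f (x p) * G (x p))
            + (integ f G (x q) (x (q + 1)) - f (x q) * G (x q)) := by
        rw [hadd]; ring
      rw [key]
      calc |(integ f G (x p) (x q) - f (x p) * G (x p))
            + (integ f G (x q) (x (q + 1)) - f (x q) * G (x q))|
          ≤ |integ f G (x p) (x q) - f (x p) * G (x p)|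
            + |integ f G (x q) (x (q + 1)) - f (x q) * G (x q)| := abs_add_le _ _
        _ ≤ _ := add_le_add_left (ih p hpq (by omega)) _
    · have : p = q + 1 := by omega
      subst this
      rw [integ_degen]
      simp

lemma abs_phi_le (hf : ∃ A, HasIntegral f G (⊥ : K) ⊤ A)
    (hg : ∃ B, HasIntegral g G (⊥ : K) ⊤ B) (hdom : ∀ x, |f x| ≤ g x)
    (hGmono : Monotone G) (huv : u ≤ v) :
    |integ f G u v - f u * G u| ≤ integ g G u v - g u * G u := by
  obtain ⟨Af, hAf⟩ := sub_integrable hf huv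
  obtain ⟨Ag, hAg⟩ := sub_integrable hg huv
  rw [integ_eq huv hAf, integ_eq huv hAg]
  have hbound : ∀ ε, 0 < ε → |Af - f u * G u| ≤ Ag - g u * G u + ε := by
    intro ε hε
    obtain ⟨δ1, hg1, hd1⟩ := hAf (ε / 2) (by linarith)
    obtain ⟨δ2, hg2, hd2⟩ := hAg (ε / 2) (by linarith)
    obtain ⟨P, hP⟩ := cousin huv (gauge_inter hg1 hg2)
    have e1 := hd1 P (fine_mono (fun x => Set.inter_subset_left) hP)
    have e2 := hd2 P (fine_mono (fun x => Set.inter_subset_right) hP)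
    have hsum : |riemannSum f G P - f u * G u| ≤ riemannSum g G P - g u * G u := by
      rw [riemannSum, riemannSum, add_sub_cancel_left, add_sub_cancel_left]
      calc |∑ i ∈ Finset.range P.n, f (P.t (i + 1)) * (G (P.x (i + 1)) - G (P.x i))|
          ≤ ∑ i ∈ Finset.range P.n, |f (P.t (i + 1)) * (G (P.x (i + 1)) - G (P.x i))| :=
            Finset.abs_sum_le_sum_abs _ _
        _ ≤ ∑ i ∈ Finset.range P.n, g (P.t (i + 1)) * (G (P.x (i + 1)) - G (P.x i)) := by
            refine Finset.sum_le_sum fun i hi => ?_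
            have hΔ : 0 ≤ G (P.x (i + 1)) - G (P.x i) :=
              sub_nonneg.mpr (hGmono (P.mono i (Finset.mem_range.mp hi)))
            rw [abs_mul, abs_of_nonneg hΔ]
            exact mul_le_mul_of_nonneg_right (hdom _) hΔ
    have h6 : |Af - riemannSum f G P| < ε / 2 := by rw [abs_sub_comm]; exact e1
    have h7 := abs_sub_le Af (riemannSum f G P) (f u * G u)
    obtain ⟨l3, l4⟩ := abs_lt.mp e2
    obtain ⟨l5, l6⟩ := abs_lt.mp h6
    linarith
  by_contra hcon
  push_neg at hcon
  have := hbound ((|Af - f u * G u| - (Ag - g u * G u)) / 2) (by linarith)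
  linarith

end KSa
end KSAux6
section KSAux7
set_option linter.unusedSectionVars false
variable {K : Type*} [LinearOrder K] [TopologicalSpace K] [OrderTopology K]
  [CompactSpace K] [BoundedOrder K]
namespace KSa
variable {u v w : K} {f g G : K → ℝ}

lemma saks_henstock {A : ℝ} (hA : HasIntegral f G (⊥ : K) ⊤ A)
    {δ : K → Set K} (hδg : IsGauge K (⊥ : K) ⊤ δ) {ε : ℝ} (hε : 0 < ε)
    (hδ : ∀ P : TaggedPartition K (⊥ : K) ⊤, P.IsFine δ → |riemannSum f G P - A| < ε)
    (P : TaggedPartition K (⊥ : K) ⊤) (hPf : P.IsFine δ) {η : ℝ} (hη : 0 < η) :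
    ∑ i ∈ Finset.range P.n,
        |f (P.t (i + 1)) * (G (P.x (i + 1)) - G (P.x i))
          - (integ f G (P.x i) (P.x (i + 1)) - f (P.x i) * G (P.x i))|
      ≤ 2 * ε + η := by
  classical
  have hf : ∃ A, HasIntegral f G (⊥ : K) ⊤ A := ⟨A, hA⟩
  set term : ℕ → ℝ := fun i =>
    f (P.t (i + 1)) * (G (P.x (i + 1)) - G (P.x i))
      - (integ f G (P.x i) (P.x (i + 1)) - f (P.x i) * G (P.x i)) with hterm
  have claim : ∀ E ⊆ Finset.range P.n, |∑ i ∈ E, term i| ≤ ε + η / 2 := by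
    intro E hE
    set η' := η / (2 * (P.n + 1)) with hη'
    have hη'pos : 0 < η' := by
      rw [hη']; positivity
    have hQ : ∀ i, i < P.n → ∃ Q : TaggedPartition K (P.x i) (P.x (i + 1)), Q.IsFine δ ∧
        (i ∈ E → riemannSum f G Q
          = f (P.x i) * G (P.x i) + f (P.t (i + 1)) * (G (P.x (i + 1)) - G (P.x i))) ∧
        (i ∉ E → |riemannSum f G Q - integ f G (P.x i) (P.x (i + 1))| < η') := by
      intro i hi
      by_cases hiE : i ∈ E
      · refine ⟨TPsingle _ _ (P.t (i + 1)) (P.mono i hi) (P.tag_mem i hi),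
          TPsingle_fine _ _ (hPf i hi), fun _ => TPsingle_sum _ _ _ _ _ _ _,
          fun h => absurd hiE h⟩
      · obtain ⟨Bi, hBi⟩ := sub_integrable hf (P.mono i hi)
        obtain ⟨δi, hδig, hδid⟩ := hBi η' hη'pos
        have hsub : Set.Icc (P.x i) (P.x (i + 1)) ⊆ Set.Icc (⊥ : K) ⊤ :=
          fun z _ => ⟨bot_le, le_top⟩
        obtain ⟨Qi, hQif⟩ := cousin (P.mono i hi)
          (gauge_inter (gauge_restrict hδg hsub) hδig)
        refine ⟨Qi, ?_, fun h => absurd h hiE, fun _ => ?_⟩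
        · exact fine_mono (fun x => Set.inter_subset_left.trans Set.inter_subset_left) hQif
        · rw [integ_eq (P.mono i hi) hBi]
          exact hδid Qi (fine_mono (fun x => Set.inter_subset_right) hQif)
    choose Q hQf hQE hQC using hQ
    set r : ℕ → ℝ := fun i => if h : i < P.n then riemannSum f G (Q i h) else 0 with hr
    have hrQ : ∀ i (h : i < P.n), riemannSum f G (Q i h) = r i := by
      intro i h
      rw [hr]
      simp only [dif_pos h]
    set P' := TPcast (TPglue P.x P.n (fun i hi => Q i hi)) P.x_zero P.x_last with hP'
    have hP'f : P'.IsFine δ := TPcast_fine (TPglue_fine _ _ _ (fun i hi => hQf i hi))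
    have h1 := hδ P' hP'f
    have hsum : riemannSum f G P'
        = f (⊥ : K) * G (⊥ : K)
          + ∑ i ∈ Finset.range P.n, (r i - f (P.x i) * G (P.x i)) := by
      rw [hP', TPcast_sum, TPglue_sum f G P.x P.n _ r hrQ, P.x_zero]
    have hAeq : A = f (⊥ : K) * G (⊥ : K)
        + ∑ i ∈ Finset.range P.n, (integ f G (P.x i) (P.x (i + 1)) - f (P.x i) * G (P.x i)) := by
      have hc := integ_chain hf P.mono P.n le_rfl
      rw [P.x_zero] at hc
      rw [← hc]
      have hxn : (P.x P.n) = (⊤ : K) := P.x_last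
      rw [hxn, integ_eq bot_le hA]
    have hdiff : riemannSum f G P' - A
        = ∑ i ∈ Finset.range P.n, (r i - integ f G (P.x i) (P.x (i + 1))) := by
      rw [hsum, hAeq, add_sub_add_left_eq_sub, ← Finset.sum_sub_distrib]
      exact Finset.sum_congr rfl fun i _ => by ring
    have hsplit : ∑ i ∈ Finset.range P.n, (r i - integ f G (P.x i) (P.x (i + 1)))
        = (∑ i ∈ Finset.range P.n \ E, (r i - integ f G (P.x i) (P.x (i + 1))))
          + ∑ i ∈ E, (r i - integ f G (P.x i) (P.x (i + 1))) :=
      (Finset.sum_sdiff hE).symm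
    have hEterm : ∑ i ∈ E, (r i - integ f G (P.x i) (P.x (i + 1))) = ∑ i ∈ E, term i := by
      refine Finset.sum_congr rfl fun i hiE => ?_
      have hi : i < P.n := Finset.mem_range.mp (hE hiE)
      rw [← hrQ i hi, hQE i hi hiE, hterm]
      ring
    have hsdiff : |∑ i ∈ Finset.range P.n \ E, (r i - integ f G (P.x i) (P.x (i + 1)))|
        ≤ (P.n : ℝ) * η' := by
      calc |∑ i ∈ Finset.range P.n \ E, (r i - integ f G (P.x i) (P.x (i + 1)))|
          ≤ ∑ i ∈ Finset.range P.n \ E, |r i - integ f G (P.x i) (P.x (i + 1))| :=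
            Finset.abs_sum_le_sum_abs _ _
        _ ≤ ∑ _i ∈ Finset.range P.n \ E, η' := by
            refine Finset.sum_le_sum fun i hiD => ?_
            have hi : i < P.n := Finset.mem_range.mp (Finset.mem_sdiff.mp hiD).1
            have hni : i ∉ E := (Finset.mem_sdiff.mp hiD).2
            rw [← hrQ i hi]
            exact le_of_lt (hQC i hi hni)
        _ = ((Finset.range P.n \ E).card : ℝ) * η' := by rw [Finset.sum_const, nsmul_eq_mul]
        _ ≤ (P.n : ℝ) * η' := by
            have hcard : (Finset.range P.n \ E).card ≤ P.n := by
              have := Finset.card_le_card (Finset.sdiff_subset (s := Finset.range P.n) (t := E))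
              simpa using this
            exact mul_le_mul_of_nonneg_right (by exact_mod_cast hcard) (le_of_lt hη'pos)
    have hnη : (P.n : ℝ) * η' ≤ η / 2 := by
      have hb : (0:ℝ) < 2 * ((P.n:ℝ) + 1) := by positivity
      rw [hη', ← mul_div_assoc, div_le_div_iff₀ hb (by norm_num : (0:ℝ) < 2)]
      nlinarith [Nat.cast_nonneg (α := ℝ) P.n, le_of_lt hη]
    calc |∑ i ∈ E, term i|
        = |(riemannSum f G P' - A)
            - ∑ i ∈ Finset.range P.n \ E, (r i - integ f G (P.x i) (P.x (i + 1)))| := by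
          rw [hdiff, hsplit, hEterm]
          congr 1
          ring
      _ ≤ |riemannSum f G P' - A|
            + |∑ i ∈ Finset.range P.n \ E, (r i - integ f G (P.x i) (P.x (i + 1)))| :=
          abs_sub _ _
      _ ≤ ε + η / 2 := by
          have := le_of_lt h1
          linarith
  set E1 := (Finset.range P.n).filter (fun i => 0 ≤ term i) with hE1
  set E2 := (Finset.range P.n).filter (fun i => ¬ 0 ≤ term i) with hE2
  have hsplit : ∑ i ∈ Finset.range P.n, |term i|
      = (∑ i ∈ E1, |term i|) + ∑ i ∈ E2, |term i| :=
    (Finset.sum_filter_add_sum_filter_not _ _ _).symm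
  have h1 : ∑ i ∈ E1, |term i| = ∑ i ∈ E1, term i := by
    refine Finset.sum_congr rfl fun i hi => ?_
    exact abs_of_nonneg (Finset.mem_filter.mp hi).2
  have h2 : ∑ i ∈ E2, |term i| = - ∑ i ∈ E2, term i := by
    rw [← Finset.sum_neg_distrib]
    refine Finset.sum_congr rfl fun i hi => ?_
    have := (Finset.mem_filter.mp hi).2
    rw [abs_of_neg (by linarith [not_le.mp this])]
  have c1 := claim E1 (Finset.filter_subset _ _)
  have c2 := claim E2 (Finset.filter_subset _ _)
  have c1' : ∑ i ∈ E1, term i ≤ ε + η / 2 := le_trans (le_abs_self _) c1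
  have c2' : - ∑ i ∈ E2, term i ≤ ε + η / 2 := le_trans (neg_le_abs _) c2
  rw [hsplit, h1, h2]
  linarith

end KSa
end KSAux7
section KSAux8
set_option linter.unusedSectionVars false
variable {K : Type*} [LinearOrder K] [TopologicalSpace K] [OrderTopology K]
  [CompactSpace K] [BoundedOrder K]
namespace KSa
variable {f g G : K → ℝ}

lemma isolate (D : Finset K) {a b : K} {δ : K → Set K} (hδ : IsGauge K a b δ) :
    ∃ δ' : K → Set K, IsGauge K a b δ' ∧ (∀ x, δ' x ⊆ δ x) ∧
      ∀ x d, d ∈ D → d ∈ δ' x → d = x := by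
  classical
  refine ⟨fun x => δ x ∩ ((⋂ d ∈ D.filter (fun d => d < x), Set.Ioi d)
    ∩ (⋂ d ∈ D.filter (fun d => x < d), Set.Iio d)), ?_, fun x => Set.inter_subset_left, ?_⟩
  · intro x hx
    obtain ⟨hm, ho, U, hUo, hUe⟩ := hδ x hx
    have hI1o : IsOpen (⋂ d ∈ D.filter (fun d => d < x), Set.Ioi d) :=
      isOpen_biInter_finset fun d _ => isOpen_Ioi
    have hI2o : IsOpen (⋂ d ∈ D.filter (fun d => x < d), Set.Iio d) :=
      isOpen_biInter_finset fun d _ => isOpen_Iio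
    have hI1c : (⋂ d ∈ D.filter (fun d => d < x), Set.Ioi d).OrdConnected := by
      refine ⟨fun p hp q hq z hz => ?_⟩
      simp only [Set.mem_iInter] at hp hq ⊢
      intro d hd
      exact lt_of_lt_of_le (hp d hd) hz.1
    have hI2c : (⋂ d ∈ D.filter (fun d => x < d), Set.Iio d).OrdConnected := by
      refine ⟨fun p hp q hq z hz => ?_⟩
      simp only [Set.mem_iInter] at hp hq ⊢
      intro d hd
      exact lt_of_le_of_lt hz.2 (hq d hd)
    have hxI : x ∈ (⋂ d ∈ D.filter (fun d => d < x), Set.Ioi d)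
        ∩ (⋂ d ∈ D.filter (fun d => x < d), Set.Iio d) := by
      constructor <;>
        · simp only [Set.mem_iInter]
          intro d hd
          exact (Finset.mem_filter.mp hd).2
    show x ∈ δ x ∩ _ ∧ (δ x ∩ _).OrdConnected ∧ _
    refine ⟨⟨hm, hxI⟩, ho.inter (hI1c.inter hI2c), U ∩ ((⋂ d ∈ D.filter (fun d => d < x), Set.Ioi d)
      ∩ (⋂ d ∈ D.filter (fun d => x < d), Set.Iio d)), hUo.inter (hI1o.inter hI2o), ?_⟩
    show δ x ∩ ((⋂ d ∈ D.filter (fun d => d < x), Set.Ioi d)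
      ∩ (⋂ d ∈ D.filter (fun d => x < d), Set.Iio d)) = _
    rw [hUe]
    ext z
    simp only [Set.mem_inter_iff]
    tauto
  · intro x d hdD hmem
    by_contra hne
    rcases lt_or_gt_of_ne hne with hlt | hgt
    · have := hmem.2.1
      simp only [Set.mem_iInter] at this
      exact lt_irrefl d (this d (Finset.mem_filter.mpr ⟨hdD, hlt⟩))
    · have := hmem.2.2
      simp only [Set.mem_iInter] at this
      exact lt_irrefl d (this d (Finset.mem_filter.mpr ⟨hdD, hgt⟩))

lemma refine_le (hf : ∃ A, HasIntegral f G (⊥ : K) ⊤ A)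
    {n : ℕ} {x : ℕ → K} (hxm : ∀ i < n, x i ≤ x (i + 1))
    {m : ℕ} {y : ℕ → K} (hym : ∀ j < m, y j ≤ y (j + 1))
    (hmem : ∀ j ≤ m, ∃ i, i ≤ n ∧ x i = y j) :
    ∑ j ∈ Finset.range m, |integ f G (y j) (y (j + 1)) - f (y j) * G (y j)|
      ≤ ∑ i ∈ Finset.range n, |integ f G (x i) (x (i + 1)) - f (x i) * G (x i)| := by
  classical
  set φ : ℕ → ℕ := fun j => if h : ∃ i, i ≤ n ∧ x i = y j then Nat.find h else 0 with hφdef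
  have hφ : ∀ j ≤ m, x (φ j) = y j ∧ φ j ≤ n := by
    intro j hj
    have h' : ∃ i, i ≤ n ∧ x i = y j := hmem j hj
    have : φ j = Nat.find h' := by rw [hφdef]; simp only [dif_pos h']
    rw [this]
    exact ⟨(Nat.find_spec h').2, (Nat.find_spec h').1⟩
  have hφmin : ∀ j (hj : j ≤ m) i, i ≤ n → x i = y j → φ j ≤ i := by
    intro j hj i hin hxi
    have h' : ∃ i, i ≤ n ∧ x i = y j := hmem j hj
    have he : φ j = Nat.find h' := by rw [hφdef]; simp only [dif_pos h']
    rw [he]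
    exact Nat.find_min' h' ⟨hin, hxi⟩
  have hφmono : ∀ j j', j ≤ j' → j' ≤ m → φ j ≤ φ j' := by
    intro j j' hjj' hj'
    by_contra hlt
    push_neg at hlt
    have h1 := hφ j (le_trans hjj' hj')
    have h2 := hφ j' hj'
    have hyy : y j ≤ y j' := chain_mono hym hjj' hj'
    have hxx : x (φ j') ≤ x (φ j) := chain_mono hxm (le_of_lt hlt) h1.2
    have hkey : x (φ j') = y j := by
      have e1 : y j ≤ x (φ j') := by rw [h2.1]; exact hyy
      have e2 : x (φ j') ≤ y j := by rw [← h1.1]; exact hxx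
      exact le_antisymm e2 e1
    have := hφmin j (le_trans hjj' hj') (φ j') h2.2 hkey
    omega
  have hstep : ∀ j < m, |integ f G (y j) (y (j + 1)) - f (y j) * G (y j)|
      ≤ ∑ i ∈ Finset.Ico (φ j) (φ (j + 1)),
          |integ f G (x i) (x (i + 1)) - f (x i) * G (x i)| := by
    intro j hj
    have h1 := hφ j (by omega)
    have h2 := hφ (j + 1) (by omega)
    rw [← h1.1, ← h2.1]
    exact abs_phi_chain hf hxm (φ (j + 1)) (φ j) (hφmono j (j + 1) (by omega) (by omega)) h2.2
  calc ∑ j ∈ Finset.range m, |integ f G (y j) (y (j + 1)) - f (y j) * G (y j)|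
      ≤ ∑ j ∈ Finset.range m, ∑ i ∈ Finset.Ico (φ j) (φ (j + 1)),
          |integ f G (x i) (x (i + 1)) - f (x i) * G (x i)| :=
        Finset.sum_le_sum fun j hj => hstep j (Finset.mem_range.mp hj)
    _ = ∑ i ∈ (Finset.range m).biUnion (fun j => Finset.Ico (φ j) (φ (j + 1))),
          |integ f G (x i) (x (i + 1)) - f (x i) * G (x i)| := by
        refine (Finset.sum_biUnion ?_).symm
        intro j hj j' hj' hne
        have hjm : j < m := Finset.mem_range.mp hj
        have hj'm : j' < m := Finset.mem_range.mp hj'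
        rcases lt_or_gt_of_ne hne with h | h
        · have := hφmono (j + 1) j' (by omega) (by omega)
          refine Finset.disjoint_left.mpr fun i hi hi' => ?_
          have b1 := Finset.mem_Ico.mp hi
          have b2 := Finset.mem_Ico.mp hi'
          omega
        · have := hφmono (j' + 1) j (by omega) (by omega)
          refine Finset.disjoint_left.mpr fun i hi hi' => ?_
          have b1 := Finset.mem_Ico.mp hi
          have b2 := Finset.mem_Ico.mp hi'
          omega
    _ ≤ ∑ i ∈ Finset.range n, |integ f G (x i) (x (i + 1)) - f (x i) * G (x i)| := by
        refine Finset.sum_le_sum_of_subset_of_nonneg ?_ (fun _ _ _ => abs_nonneg _)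
        intro i hi
        obtain ⟨j, hj, hiIco⟩ := Finset.mem_biUnion.mp hi
        have hjm : j < m := Finset.mem_range.mp hj
        have hb := Finset.mem_Ico.mp hiIco
        have := (hφ (j + 1) (by omega)).2
        exact Finset.mem_range.mpr (by omega)

end KSa
end KSAux8
theorem abs_integrable_of_dominated {K : Type*} [LinearOrder K] [TopologicalSpace K]
    [OrderTopology K] [CompactSpace K] [BoundedOrder K] (G f g : K → ℝ)
    (hGmono : Monotone G) (hGam : Amenable G)
    (hf : ∃ A, HasIntegral f G (⊥ : K) ⊤ A) (hg : ∃ B, HasIntegral g G (⊥ : K) ⊤ B)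
    (hdom : ∀ x : K, |f x| ≤ g x) :
    ∃ C, HasIntegral (fun x => |f x|) G (⊥ : K) ⊤ C := by
  classical
  obtain ⟨A, hA⟩ := hf
  have hf' : ∃ A, HasIntegral f G (⊥ : K) ⊤ A := ⟨A, hA⟩
  set Vset : Set ℝ := {w | ∃ (n : ℕ) (x : ℕ → K), x 0 = ⊥ ∧ x n = ⊤ ∧
      (∀ i < n, x i ≤ x (i + 1)) ∧
      w = ∑ i ∈ Finset.range n, |KSa.integ f G (x i) (x (i + 1)) - f (x i) * G (x i)|}
    with hVset
  have hV1 : Vset.Nonempty := by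
    refine ⟨|KSa.integ f G ⊥ ⊤ - f ⊥ * G ⊥|, 1, fun i => if i = 0 then ⊥ else ⊤,
      by simp, by simp, ?_, ?_⟩
    · intro i hi
      have : i = 0 := by omega
      subst this
      simp
    · rw [Finset.sum_range_one]
      norm_num
  have hbdd : BddAbove Vset := by
    refine ⟨KSa.integ g G ⊥ ⊤ - g ⊥ * G ⊥, ?_⟩
    rintro w ⟨n, x, hx0, hxn, hxm, rfl⟩
    calc ∑ i ∈ Finset.range n, |KSa.integ f G (x i) (x (i + 1)) - f (x i) * G (x i)|
        ≤ ∑ i ∈ Finset.range n, (KSa.integ g G (x i) (x (i + 1)) - g (x i) * G (x i)) :=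
          Finset.sum_le_sum fun i hi =>
            KSa.abs_phi_le hf' hg hdom hGmono (hxm i (Finset.mem_range.mp hi))
      _ = KSa.integ g G (x 0) (x n) - g (x 0) * G (x 0) := by
          rw [KSa.integ_chain hg hxm n le_rfl]; ring
      _ = KSa.integ g G ⊥ ⊤ - g ⊥ * G ⊥ := by rw [hx0, hxn]
  set T := sSup Vset with hT
  refine ⟨|f ⊥| * G ⊥ + T, ?_⟩
  intro ε hε
  obtain ⟨w0, hw0V, hw0⟩ := exists_lt_of_lt_csSup hV1 (show T - ε / 4 < T by linarith)
  obtain ⟨m, y, hy0, hyl, hymono, hw0eq⟩ := hw0V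
  obtain ⟨δf, hδfg, hδf⟩ := hA (ε / 16) (by linarith)
  obtain ⟨δ', hδ'g, hδ'sub, hδ'iso⟩ := KSa.isolate ((Finset.range (m + 1)).image y) hδfg
  refine ⟨δ', hδ'g, ?_⟩
  intro P hPf
  have hPfδf : P.IsFine δf := fine_mono hδ'sub hPf
  set Q := KSa.TPsplitTags P with hQdef
  have hQf : Q.IsFine δf := KSa.TPsplitTags_fine hPfδf
  have hQs : riemannSum (fun x => |f x|) G Q = riemannSum (fun x => |f x|) G P :=
    KSa.TPsplitTags_sum _ G P
  have hSH := KSa.saks_henstock hA hδfg (show (0 : ℝ) < ε / 16 by linarith) hδf Q hQf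
    (show (0 : ℝ) < ε / 4 by linarith)
  set VQ := ∑ i ∈ Finset.range Q.n,
      |KSa.integ f G (Q.x i) (Q.x (i + 1)) - f (Q.x i) * G (Q.x i)| with hVQ
  have hVQmem : VQ ∈ Vset := ⟨Q.n, Q.x, Q.x_zero, Q.x_last, Q.mono, rfl⟩
  have hVQle : VQ ≤ T := le_csSup hbdd hVQmem
  have hmem2 : ∀ j ≤ m, ∃ i, i ≤ Q.n ∧ Q.x i = y j := by
    intro j hj
    have hyIcc : y j ∈ Set.Icc (⊥ : K) ⊤ := ⟨bot_le, le_top⟩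
    rcases P.cover hyIcc with h | ⟨i, hi, hIoc⟩
    · exact ⟨0, Nat.zero_le _, by rw [Q.x_zero, h]⟩
    · have hyin : y j ∈ δ' (P.t (i + 1)) := hPf i hi hIoc
      have hyd : y j = P.t (i + 1) :=
        hδ'iso _ _ (Finset.mem_image.mpr ⟨j, Finset.mem_range.mpr (by omega), rfl⟩) hyin
      refine ⟨2 * i + 1, ?_, ?_⟩
      · have hn : Q.n = 2 * P.n := rfl
        omega
      · show KSa.tsx P (2 * i + 1) = y j
        rw [KSa.tsx_odd, hyd]
  have hVQge : T - ε / 4 < VQ := by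
    apply lt_of_lt_of_le hw0
    rw [hw0eq]
    exact KSa.refine_le hf' Q.mono hymono hmem2
  set S := ∑ i ∈ Finset.range Q.n, |f (Q.t (i + 1))| * (G (Q.x (i + 1)) - G (Q.x i)) with hS
  have hrw : riemannSum (fun x => |f x|) G Q = |f ⊥| * G ⊥ + S := rfl
  have hkey : |S - VQ| ≤ 2 * (ε / 16) + ε / 4 := by
    rw [hS, hVQ, ← Finset.sum_sub_distrib]
    calc |∑ i ∈ Finset.range Q.n, (|f (Q.t (i + 1))| * (G (Q.x (i + 1)) - G (Q.x i))
            - |KSa.integ f G (Q.x i) (Q.x (i + 1)) - f (Q.x i) * G (Q.x i)|)|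
        ≤ ∑ i ∈ Finset.range Q.n, |(|f (Q.t (i + 1))| * (G (Q.x (i + 1)) - G (Q.x i))
            - |KSa.integ f G (Q.x i) (Q.x (i + 1)) - f (Q.x i) * G (Q.x i)|)| :=
          Finset.abs_sum_le_sum_abs _ _
      _ ≤ ∑ i ∈ Finset.range Q.n, |f (Q.t (i + 1)) * (G (Q.x (i + 1)) - G (Q.x i))
            - (KSa.integ f G (Q.x i) (Q.x (i + 1)) - f (Q.x i) * G (Q.x i))| := by
          refine Finset.sum_le_sum fun i hi => ?_
          have hΔ : 0 ≤ G (Q.x (i + 1)) - G (Q.x i) :=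
            sub_nonneg.mpr (hGmono (Q.mono i (Finset.mem_range.mp hi)))
          have h1 : |f (Q.t (i + 1))| * (G (Q.x (i + 1)) - G (Q.x i))
              = |f (Q.t (i + 1)) * (G (Q.x (i + 1)) - G (Q.x i))| := by
            rw [abs_mul, abs_of_nonneg hΔ]
          rw [h1]
          exact abs_abs_sub_abs_le_abs_sub _ _
      _ ≤ 2 * (ε / 16) + ε / 4 := hSH
  rw [← hQs, hrw]
  have hfin : |(|f ⊥| * G ⊥ + S) - (|f ⊥| * G ⊥ + (T : ℝ))| = |S - T| := by
    rw [add_sub_add_left_eq_sub]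
  rw [hfin]
  obtain ⟨l1, l2⟩ := abs_le.mp hkey
  apply abs_lt.mpr
  constructor <;> linarith
end
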